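/- arXiv:math/9905109 — 3 statements merged into one kernel-verified Lean document; each statement's English description precedes it below -/
import Mathlib

section
/- Let P and Q be 2-dimensional lattice polygons in ℝ² with the same universal counting function. Then for every z ∈ ℤ² the lattice widths agree: w(z,P) = w(z,Q). -/
open MeasureTheory Set Pointwise

noncomputable section

/-- Euclidean space `ℝ^n`. -/
abbrev Euc (n : ℕ) := EuclideanSpace ℝ (Fin n)

/-- `x ∈ ℝ^n` is an integer (lattice) point, i.e. a point of `ℤ^n`. -/
def IsZ {n : ℕ} (x : Euc n) : Prop := ∀ i, ∃ m : ℤ, x i = (m : ℝ)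

/-- A lattice polytope: the convex hull of a (nonempty) finite set of points of `ℤ^n`. -/
def IsLatticePolytope {n : ℕ} (P : Set (Euc n)) : Prop :=
  ∃ S : Finset (Euc n), S.Nonempty ∧ (∀ x ∈ S, IsZ x) ∧ P = convexHull ℝ (S : Set (Euc n))

/-- `P` and `Q` have the same universal counting function:
`|π(P) ∩ ℤ^n| = |π(Q) ∩ ℤ^n|` for every injective linear `π : ℝ^n → ℝ^n`
with `π(ℤ^n) ⊆ ℤ^n`. -/
def SameUCF {n : ℕ} (P Q : Set (Euc n)) : Prop :=
  ∀ π : Euc n →ₗ[ℝ] Euc n, Function.Injective π → (∀ x, IsZ x → IsZ (π x)) →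
    Set.ncard {x | x ∈ π '' P ∧ IsZ x} = Set.ncard {x | x ∈ π '' Q ∧ IsZ x}

/-- The pairing `⟨z, x⟩` of `z ∈ ℤ^n` with `x ∈ ℝ^n`. -/
def dotZ {n : ℕ} (z : Fin n → ℤ) (x : Euc n) : ℝ := ∑ i, (z i : ℝ) * x i

/-- `z ∈ ℤ^n` is primitive: the gcd of its coordinates is 1. -/
def IsPrimitive {n : ℕ} (z : Fin n → ℤ) : Prop := Finset.univ.gcd z = 1

/-- The face `P(z)` of `P`: the set of points of `P` where the functional `⟨z, ·⟩`
attains its maximum over `P`. -/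
def polyFace {n : ℕ} (P : Set (Euc n)) (z : Fin n → ℤ) : Set (Euc n) :=
  {x ∈ P | ∀ y ∈ P, dotZ z y ≤ dotZ z x}

/-- The lattice width of `P` in direction `z ∈ ℤ^n`: `max {⟨z, x − y⟩ : x, y ∈ P}`. -/
def latticeWidth {n : ℕ} (z : Fin n → ℤ) (P : Set (Euc n)) : ℝ :=
  sSup {r | ∃ x ∈ P, ∃ y ∈ P, dotZ z x - dotZ z y = r}

attribute [local instance 10] Classical.propDecidable


/-- point of Euc 2 from two reals -/
def pt (s t : ℝ) : Euc 2 := (WithLp.equiv 2 (Fin 2 → ℝ)).symm ![s, t]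

@[simp] lemma pt_apply0 (s t : ℝ) : pt s t 0 = s := rfl
@[simp] lemma pt_apply1 (s t : ℝ) : pt s t 1 = t := rfl

lemma euc_ext {x y : Euc 2} (h0 : x 0 = y 0) (h1 : x 1 = y 1) : x = y := by
  ext i
  fin_cases i <;> assumption

def lmap (a b c d : ℝ) : Euc 2 →ₗ[ℝ] Euc 2 where
  toFun x := pt (a * x 0 + b * x 1) (c * x 0 + d * x 1)
  map_add' x y := by
    apply euc_ext <;> simp [pt] <;> ring
  map_smul' r x := by
    apply euc_ext <;> simp [pt] <;> ring

@[simp] lemma lmap_apply0 (a b c d : ℝ) (x : Euc 2) : lmap a b c d x 0 = a * x 0 + b * x 1 := rfl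
@[simp] lemma lmap_apply1 (a b c d : ℝ) (x : Euc 2) : lmap a b c d x 1 = c * x 0 + d * x 1 := rfl

lemma lmap_injective {a b c d : ℝ} (h : a * d - b * c ≠ 0) :
    Function.Injective (lmap a b c d) := by
  intro x y hxy
  have h0 : a * x 0 + b * x 1 = a * y 0 + b * y 1 := by
    have := congrFun (congrArg (WithLp.equiv 2 (Fin 2 → ℝ)) hxy) 0
    simpa using congrArg (fun u : Euc 2 => u 0) hxy
  have h1 : c * x 0 + d * x 1 = c * y 0 + d * y 1 :=
    congrArg (fun u : Euc 2 => u 1) hxy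
  apply euc_ext
  · have : (a*d - b*c) * x 0 = (a*d - b*c) * y 0 := by linear_combination d * h0 - b * h1
    exact mul_left_cancel₀ h this
  · have : (a*d - b*c) * x 1 = (a*d - b*c) * y 1 := by linear_combination a * h1 - c * h0
    exact mul_left_cancel₀ h this

lemma euc_sum_apply {ι : Type*} (s : Finset ι) (f : ι → Euc 2) (i : Fin 2) :
    (∑ y ∈ s, f y) i = ∑ y ∈ s, f y i := by
  classical
  induction s using Finset.cons_induction with
  | empty => rfl
  | cons a s ha ih =>
    rw [Finset.sum_cons, Finset.sum_cons, PiLp.add_apply, ih]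

lemma euc_smul_apply (r : ℝ) (x : Euc 2) (i : Fin 2) : (r • x) i = r * x i := rfl

lemma trip_sum {t : Finset (Euc 2)} {a b c : Euc 2} (ha : a ∈ t) (hb : b ∈ t) (hc : c ∈ t)
    (hab : a ≠ b) (hac : a ≠ c) (hbc : b ≠ c) (va vb vc : ℝ) (g : Euc 2 → ℝ) :
    ∑ y ∈ t, (if y = a then va else if y = b then vb else if y = c then vc else 0) * g y
      = va * g a + vb * g b + vc * g c := by
  classical
  rw [← Finset.sum_subset (s₁ := {a, b, c}) (by
      intro y hy
      simp only [Finset.mem_insert, Finset.mem_singleton] at hy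
      rcases hy with rfl | rfl | rfl <;> assumption)
    (by
      intro y _ hy
      simp only [Finset.mem_insert, Finset.mem_singleton, not_or] at hy
      obtain ⟨h1, h2, h3⟩ := hy
      simp [h1, h2, h3])]
  rw [Finset.sum_insert (by simp [hab, hac]), Finset.sum_insert (by simp [hbc]),
    Finset.sum_singleton]
  simp [hab.symm, hac.symm, hbc.symm, hab, hac, hbc]
  ring

lemma exists_descent_of {t : Finset (Euc 2)} {a b c : Euc 2} (ha : a ∈ t) (hb : b ∈ t)
    (hc : c ∈ t) (hab : a ≠ b) (hac : a ≠ c) (hbc : b ≠ c) (va vb vc : ℝ)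
    (hsum : va + vb + vc = 0) (h0 : va * a 0 + vb * b 0 + vc * c 0 = 0)
    (h1 : 0 ≤ va * a 1 + vb * b 1 + vc * c 1) (hneg : va < 0 ∨ vb < 0 ∨ vc < 0) :
    ∃ μ : Euc 2 → ℝ, (∑ y ∈ t, μ y = 0) ∧ (∑ y ∈ t, μ y * y 0 = 0) ∧
      (0 ≤ ∑ y ∈ t, μ y * y 1) ∧ (∃ y ∈ t, μ y < 0) := by
  refine ⟨fun y => if y = a then va else if y = b then vb else if y = c then vc else 0,
    ?_, ?_, ?_, ?_⟩
  · have := trip_sum ha hb hc hab hac hbc va vb vc (fun _ => 1)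
    simpa [hsum] using this
  · have := trip_sum ha hb hc hab hac hbc va vb vc (fun y => y 0)
    rw [this]; linarith
  · have := trip_sum ha hb hc hab hac hbc va vb vc (fun y => y 1)
    rw [this]; linarith
  · rcases hneg with h | h | h
    · exact ⟨a, ha, by simpa using h⟩
    · exact ⟨b, hb, by simp only [hab.symm, if_neg, if_pos]; simpa [Ne.symm hab] using h⟩
    · exact ⟨c, hc, by simpa [Ne.symm hac, Ne.symm hbc] using h⟩

lemma exists_descent {t : Finset (Euc 2)} (h3 : 3 ≤ t.card) :
    ∃ μ : Euc 2 → ℝ, (∑ y ∈ t, μ y = 0) ∧ (∑ y ∈ t, μ y * y 0 = 0) ∧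
      (0 ≤ ∑ y ∈ t, μ y * y 1) ∧ (∃ y ∈ t, μ y < 0) := by
  obtain ⟨a, ha⟩ := Finset.card_pos.mp (show 0 < t.card by omega)
  obtain ⟨b, hb, hba⟩ := Finset.exists_mem_ne (show 1 < t.card by omega) a
  have hbea : b ∈ t.erase a := Finset.mem_erase.mpr ⟨hba, hb⟩
  have : 0 < ((t.erase a).erase b).card := by
    have h1 : (t.erase a).card = t.card - 1 := Finset.card_erase_of_mem ha
    have h2 : ((t.erase a).erase b).card = (t.erase a).card - 1 :=
      Finset.card_erase_of_mem hbea
    omega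
  obtain ⟨c, hc2⟩ := Finset.card_pos.mp this
  have hcb : c ≠ b := (Finset.mem_erase.mp hc2).1
  have hca : c ≠ a := (Finset.mem_erase.mp (Finset.mem_erase.mp hc2).2).1
  have hc : c ∈ t := Finset.mem_of_mem_erase (Finset.mem_of_mem_erase hc2)
  have hab : a ≠ b := hba.symm  -- note: hba : b ≠ a
  by_cases hA : a 0 = b 0
  · rcases le_total (b 1) (a 1) with h | h
    · exact exists_descent_of ha hb hc hab hca.symm hcb.symm 1 (-1) 0
        (by ring) (by linarith) (by linarith) (by norm_num)
    · exact exists_descent_of hb ha hc hba hcb.symm hca.symm 1 (-1) 0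
        (by ring) (by linarith) (by linarith) (by norm_num)
  · set va := b 0 - c 0 with hva
    set vb := c 0 - a 0 with hvb
    set vc := a 0 - b 0 with hvc
    have hvcne : vc ≠ 0 := sub_ne_zero.mpr hA
    rcases le_total 0 (va * a 1 + vb * b 1 + vc * c 1) with he | he
    · refine exists_descent_of ha hb hc hab hca.symm hcb.symm va vb vc
        (by rw [hva, hvb, hvc]; ring) (by rw [hva, hvb, hvc]; ring) he ?_
      by_contra hcon
      push_neg at hcon
      obtain ⟨n1, n2, n3⟩ := hcon
      have : vc > 0 := lt_of_le_of_ne n3 (Ne.symm hvcne)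
      have : va + vb + vc = 0 := by rw [hva, hvb, hvc]; ring
      linarith
    · refine exists_descent_of ha hb hc hab hca.symm hcb.symm (-va) (-vb) (-vc)
        (by rw [hva, hvb, hvc]; ring) (by rw [hva, hvb, hvc]; ring) (by linarith) ?_
      by_contra hcon
      push_neg at hcon
      obtain ⟨n1, n2, n3⟩ := hcon
      have hvc0 : -vc > 0 := lt_of_le_of_ne n3 (Ne.symm (neg_ne_zero.mpr hvcne))
      have : va + vb + vc = 0 := by rw [hva, hvb, hvc]; ring
      linarith

lemma chord_pair {p q : Euc 2} {wp wq : ℝ} (hp : 0 ≤ wp) (hq : 0 ≤ wq)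
    (hs : wp + wq = 1) (hpq : p 0 ≤ q 0) :
    p 0 ≤ q 0 ∧ ∃ u : ℝ, 0 ≤ u ∧ u ≤ 1 ∧
      (1-u) * p 0 + u * q 0 = (wp • p + wq • q) 0 ∧
      (wp • p + wq • q) 1 ≤ (1-u) * p 1 + u * q 1 := by
  have hw : wp = 1 - wq := by linarith
  refine ⟨hpq, wq, hq, by linarith, ?_, ?_⟩ <;>
    rw [PiLp.add_apply, euc_smul_apply, euc_smul_apply, hw]

lemma chord_aux (n : ℕ) : ∀ (t : Finset (Euc 2)) (w : Euc 2 → ℝ), t.card ≤ n →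
    (∀ y ∈ t, 0 < w y) → (∑ y ∈ t, w y) = 1 →
    ∃ p ∈ t, ∃ q ∈ t, p 0 ≤ q 0 ∧ ∃ u : ℝ, 0 ≤ u ∧ u ≤ 1 ∧
      (1-u) * p 0 + u * q 0 = (∑ y ∈ t, w y • y) 0 ∧
      (∑ y ∈ t, w y • y) 1 ≤ (1-u) * p 1 + u * q 1 := by
  induction n with
  | zero =>
    intro t w hcard _ hsum
    have : t.card = 0 := by omega
    rw [Finset.card_eq_zero] at this; subst this; simp at hsum
  | succ n IH =>
    intro t w hcard hpos hsum
    by_cases h3 : 3 ≤ t.card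
    · -- descent step
      obtain ⟨μ, hμ0, hμx0, hμx1, y₀, hy₀t, hy₀neg⟩ := exists_descent h3
      set tneg := t.filter (fun y => μ y < 0) with htneg
      have hne : tneg.Nonempty := ⟨y₀, Finset.mem_filter.mpr ⟨hy₀t, hy₀neg⟩⟩
      set τ := tneg.inf' hne (fun y => w y / (-μ y)) with hτ
      obtain ⟨i0, hi0mem, hi0⟩ := Finset.exists_mem_eq_inf' hne (fun y => w y / (-μ y))
      have hi0t : i0 ∈ t := (Finset.mem_filter.mp hi0mem).1
      have hi0neg : μ i0 < 0 := (Finset.mem_filter.mp hi0mem).2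
      have hτpos : 0 < τ := by
        rw [hτ, hi0]
        exact div_pos (hpos i0 hi0t) (neg_pos.mpr hi0neg)
      have hτle : ∀ y ∈ t, μ y < 0 → τ ≤ w y / (-μ y) := fun y hy hyn =>
        Finset.inf'_le _ (Finset.mem_filter.mpr ⟨hy, hyn⟩)
      set w' := fun y => w y + τ * μ y with hw'
      have hw'nonneg : ∀ y ∈ t, 0 ≤ w' y := by
        intro y hy
        rcases lt_or_ge (μ y) 0 with h | h
        · have h1 := hτle y hy h
          have h2 : 0 < -μ y := neg_pos.mpr h
          rw [le_div_iff₀ h2] at h1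
          simp only [hw']; nlinarith
        · have := hpos y hy
          have : 0 ≤ τ * μ y := mul_nonneg hτpos.le h
          simp only [hw']; linarith [hpos y hy]
      have hw'i0 : w' i0 = 0 := by
        have hμne : μ i0 ≠ 0 := ne_of_lt hi0neg
        simp only [hw', hτ, hi0]
        rw [div_mul_eq_mul_div, div_neg, mul_div_assoc, div_self hμne, mul_one]
        ring
      set t' := t.filter (fun y => w' y ≠ 0) with ht'
      have ht'sub : t' ⊆ t.erase i0 := by
        intro y hy
        obtain ⟨hyt, hyne⟩ := Finset.mem_filter.mp hy
        exact Finset.mem_erase.mpr ⟨fun h => hyne (h ▸ hw'i0), hyt⟩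
      have ht'card : t'.card ≤ n := by
        have h1 := Finset.card_le_card ht'sub
        have h2 : (t.erase i0).card = t.card - 1 := Finset.card_erase_of_mem hi0t
        omega
      have hpos' : ∀ y ∈ t', 0 < w' y := by
        intro y hy
        obtain ⟨hyt, hyne⟩ := Finset.mem_filter.mp hy
        exact lt_of_le_of_ne (hw'nonneg y hyt) (Ne.symm hyne)
      have hsumw' : ∑ y ∈ t, w' y = 1 := by
        simp only [hw']
        rw [Finset.sum_add_distrib, ← Finset.mul_sum, hμ0, hsum]; ring
      have hsum' : ∑ y ∈ t', w' y = 1 := by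
        rw [ht', Finset.sum_filter_ne_zero]; exact hsumw'
      have hxx' : ∀ i, (∑ y ∈ t', w' y • y) i
          = (∑ y ∈ t, w y • y) i + τ * (∑ y ∈ t, μ y * y i) := by
        intro i
        have h1 : ∑ y ∈ t', w' y • y = ∑ y ∈ t, w' y • y := by
          rw [ht']
          refine Finset.sum_filter_of_ne ?_
          intro y _ hne hz
          exact hne (by rw [hz, zero_smul])
        rw [h1, euc_sum_apply, euc_sum_apply]
        simp only [euc_smul_apply, hw']
        rw [Finset.mul_sum, ← Finset.sum_add_distrib]
        exact Finset.sum_congr rfl (fun y _ => by ring)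
      obtain ⟨p, hp, q, hq, hpq, u, hu0, hu1, heq, hle⟩ := IH t' w' ht'card hpos' hsum'
      have hpt : p ∈ t := Finset.mem_of_mem_filter p hp
      have hqt : q ∈ t := Finset.mem_of_mem_filter q hq
      refine ⟨p, hpt, q, hqt, hpq, u, hu0, hu1, ?_, ?_⟩
      · rw [heq, hxx' 0, hμx0]; ring
      · have h2 := hxx' 1
        have h3 : 0 ≤ τ * (∑ y ∈ t, μ y * y 1) := mul_nonneg hτpos.le hμx1
        linarith [hle, h2.symm.le]
    · -- base cases: card ≤ 2
      interval_cases hc : t.card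
      · rw [Finset.card_eq_zero] at hc; subst hc; simp at hsum
      · obtain ⟨p, rfl⟩ := Finset.card_eq_one.mp hc
        rw [Finset.sum_singleton] at hsum
        refine ⟨p, by simp, p, by simp, le_refl _, 0, le_refl _, by norm_num, ?_, ?_⟩ <;>
          rw [Finset.sum_singleton, euc_smul_apply, hsum] <;> norm_num
      · obtain ⟨p, q, hne, rfl⟩ := Finset.card_eq_two.mp hc
        have hp : 0 ≤ w p := (hpos p (by simp)).le
        have hq : 0 ≤ w q := (hpos q (by simp)).le
        rw [Finset.sum_pair hne] at hsum
        rcases le_total (p 0) (q 0) with hor | hor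
        · refine ⟨p, by simp, q, by simp, ?_⟩
          rw [Finset.sum_pair hne]
          exact chord_pair hp hq hsum hor
        · refine ⟨q, by simp, p, by simp, ?_⟩
          rw [Finset.sum_pair hne, add_comm (w p • p)]
          exact chord_pair hq hp (by linarith) hor

lemma chord {F : Finset (Euc 2)} {x : Euc 2} (hx : x ∈ convexHull ℝ (F : Set (Euc 2))) :
    ∃ p ∈ F, ∃ q ∈ F, p 0 ≤ q 0 ∧ ∃ u : ℝ, 0 ≤ u ∧ u ≤ 1 ∧
      (1-u) * p 0 + u * q 0 = x 0 ∧ x 1 ≤ (1-u) * p 1 + u * q 1 := by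
  obtain ⟨w, hw0, hw1, hwx⟩ := Finset.mem_convexHull'.mp hx
  set t := F.filter (fun y => w y ≠ 0) with ht
  have hpos : ∀ y ∈ t, 0 < w y := fun y hy =>
    lt_of_le_of_ne (hw0 y (Finset.mem_of_mem_filter y hy))
      (Ne.symm (Finset.mem_filter.mp hy).2)
  have hsum : ∑ y ∈ t, w y = 1 := by rw [ht, Finset.sum_filter_ne_zero]; exact hw1
  have hx' : ∑ y ∈ t, w y • y = x := by
    have key : ∀ y ∈ F, w y • y ≠ 0 → w y ≠ 0 := fun y _ hne hz => hne (by rw [hz, zero_smul])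
    rw [ht, Finset.sum_filter_of_ne key]
    exact hwx
  obtain ⟨p, hp, q, hq, hpq, u, hu0, hu1, h1, h2⟩ :=
    chord_aux t.card t w le_rfl hpos hsum
  rw [hx'] at h1 h2
  exact ⟨p, Finset.mem_of_mem_filter p hp, q, Finset.mem_of_mem_filter q hq,
    hpq, u, hu0, hu1, h1, h2⟩

/-- a real that is rational with explicit denominator -/
def RatPt (r : ℝ) : Prop := ∃ (c : ℤ) (d : ℕ), 0 < d ∧ (d : ℝ) * r = c

lemma RatPt.neg {r : ℝ} (h : RatPt r) : RatPt (-r) := by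
  obtain ⟨c, d, hd, hcd⟩ := h
  exact ⟨-c, d, hd, by push_cast; linarith⟩

lemma pt_one_mem {S' : Finset (Euc 2)} {p : Euc 2} (hp : p ∈ S') :
    pt (p 0) (p 1) ∈ convexHull ℝ (S' : Set (Euc 2)) := by
  have : pt (p 0) (p 1) = p := euc_ext rfl rfl
  rw [this]
  exact subset_convexHull ℝ _ hp

lemma top_rat {S' : Finset (Euc 2)} (hZ : ∀ y ∈ S', ∀ i, ∃ a : ℤ, y i = (a:ℝ)) {m : ℤ} {β : ℝ}
    (hβ : pt (m:ℝ) β ∈ convexHull ℝ (S' : Set (Euc 2)))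
    (hmax : ∀ t : ℝ, pt (m:ℝ) t ∈ convexHull ℝ (S' : Set (Euc 2)) → t ≤ β) : RatPt β := by
  obtain ⟨p, hp, q, hq, hpq, u, hu0, hu1, he, hle⟩ := chord hβ
  rw [pt_apply0] at he
  rw [pt_apply1] at hle
  set v := (1-u) * p 1 + u * q 1 with hv
  have hcombmem : (1-u) • p + u • q ∈ convexHull ℝ (S' : Set (Euc 2)) :=
    (convex_convexHull ℝ (S' : Set (Euc 2))) (subset_convexHull ℝ _ hp)
      (subset_convexHull ℝ _ hq) (by linarith) hu0 (by ring)
  have hcombeq : pt (m:ℝ) v = (1-u) • p + u • q := by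
    apply euc_ext
    · rw [pt_apply0, PiLp.add_apply, euc_smul_apply, euc_smul_apply]; linarith [he]
    · rw [pt_apply1, PiLp.add_apply, euc_smul_apply, euc_smul_apply]
  have hvle : v ≤ β := hmax v (by rw [hcombeq]; exact hcombmem)
  have hβv : β = v := le_antisymm hle hvle
  obtain ⟨ip0, hip0⟩ := hZ p hp 0
  obtain ⟨ip1, hip1⟩ := hZ p hp 1
  obtain ⟨iq0, hiq0⟩ := hZ q hq 0
  obtain ⟨iq1, hiq1⟩ := hZ q hq 1
  by_cases hd : p 0 = q 0
  · have hpm : p 0 = (m:ℝ) := by linear_combination he + u * hd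
    have hqm : q 0 = (m:ℝ) := by linear_combination he - (1-u) * hd
    rcases le_total (p 1) (q 1) with h | h
    · refine ⟨iq1, 1, one_pos, ?_⟩
      have hqmem : pt (m:ℝ) (q 1) ∈ convexHull ℝ (S' : Set (Euc 2)) := by
        rw [← hqm]; exact pt_one_mem hq
      have h1 : q 1 ≤ β := hmax _ hqmem
      have h2 : β ≤ q 1 := by rw [hβv, hv]; nlinarith
      push_cast
      rw [one_mul, le_antisymm h2 h1, hiq1]
    · refine ⟨ip1, 1, one_pos, ?_⟩
      have hpmem : pt (m:ℝ) (p 1) ∈ convexHull ℝ (S' : Set (Euc 2)) := by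
        rw [← hpm]; exact pt_one_mem hp
      have h1 : p 1 ≤ β := hmax _ hpmem
      have h2 : β ≤ p 1 := by rw [hβv, hv]; nlinarith
      push_cast
      rw [one_mul, le_antisymm h2 h1, hip1]
  · have hlt : p 0 < q 0 := lt_of_le_of_ne hpq hd
    have hiplt : ip0 < iq0 := by
      have h' : (ip0:ℝ) < iq0 := by rw [← hip0, ← hiq0]; exact hlt
      exact_mod_cast h'
    refine ⟨(iq0 - m) * ip1 + (m - ip0) * iq1, (iq0 - ip0).toNat, by omega, ?_⟩
    have htn : ((iq0 - ip0).toNat : ℝ) = (iq0 : ℝ) - ip0 := by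
      have h' : ((iq0 - ip0).toNat : ℤ) = iq0 - ip0 := Int.toNat_of_nonneg (by omega)
      exact_mod_cast congrArg (fun n : ℤ => (n : ℝ)) h'
    rw [htn, hβv, hv]
    push_cast
    rw [← hip0, ← hip1, ← hiq0, ← hiq1]
    linear_combination (q 1 - p 1) * he

/-- reflection in the second coordinate -/
def RR : Euc 2 →ₗ[ℝ] Euc 2 := lmap 1 0 0 (-1)

lemma RR_apply0 (x : Euc 2) : (RR x) 0 = x 0 := by
  show 1 * x 0 + 0 * x 1 = x 0; ring

lemma RR_apply1 (x : Euc 2) : (RR x) 1 = -(x 1) := by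
  show 0 * x 0 + (-1) * x 1 = -(x 1); ring

lemma RR_RR (x : Euc 2) : RR (RR x) = x :=
  euc_ext (by rw [RR_apply0, RR_apply0]) (by rw [RR_apply1, RR_apply1, neg_neg])

lemma RR_pt (s t : ℝ) : RR (pt s t) = pt s (-t) :=
  euc_ext (by rw [RR_apply0, pt_apply0, pt_apply0]) (by rw [RR_apply1, pt_apply1, pt_apply1])

lemma bot_rat {S' : Finset (Euc 2)} (hZ : ∀ y ∈ S', ∀ i, ∃ a : ℤ, y i = (a:ℝ)) {m : ℤ} {α : ℝ}
    (hα : pt (m:ℝ) α ∈ convexHull ℝ (S' : Set (Euc 2)))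
    (hmin : ∀ t : ℝ, pt (m:ℝ) t ∈ convexHull ℝ (S' : Set (Euc 2)) → α ≤ t) : RatPt α := by
  classical
  set S'' : Finset (Euc 2) := S'.image (fun y => RR y) with hS''
  have hcoe : (S'' : Set (Euc 2)) = RR '' (S' : Set (Euc 2)) := by
    rw [hS'', Finset.coe_image]
  have hZ'' : ∀ y ∈ S'', ∀ i, ∃ a : ℤ, y i = (a:ℝ) := by
    intro y hy i
    obtain ⟨x, hx, rfl⟩ := Finset.mem_image.mp hy
    obtain ⟨a0, ha0⟩ := hZ x hx 0
    obtain ⟨a1, ha1⟩ := hZ x hx 1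
    fin_cases i
    · exact ⟨a0, by show (RR x) 0 = _; rw [RR_apply0]; exact ha0⟩
    · exact ⟨-a1, by show (RR x) 1 = _; rw [RR_apply1, ha1]; push_cast; ring⟩
  have himg : ∀ x ∈ convexHull ℝ (S' : Set (Euc 2)), RR x ∈ convexHull ℝ (S'' : Set (Euc 2)) := by
    intro x hx
    rw [hcoe, ← RR.image_convexHull]
    exact Set.mem_image_of_mem _ hx
  have himg' : ∀ x ∈ convexHull ℝ (S'' : Set (Euc 2)), RR x ∈ convexHull ℝ (S' : Set (Euc 2)) := by
    intro x hx
    have h1 : RR x ∈ convexHull ℝ (RR '' (S'' : Set (Euc 2))) := by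
      rw [← RR.image_convexHull]
      exact Set.mem_image_of_mem _ hx
    have h2 : RR '' (S'' : Set (Euc 2)) = (S' : Set (Euc 2)) := by
      rw [hcoe, ← Set.image_comp]
      have : (RR ∘ RR : Euc 2 → Euc 2) = id := funext fun y => RR_RR y
      rw [this, Set.image_id]
    rwa [h2] at h1
  have hres : RatPt (-α) := by
    apply top_rat hZ'' (m := m) (β := -α)
    · rw [← RR_pt]
      exact himg _ hα
    · intro t ht
      have := himg' _ ht
      rw [RR_pt] at this
      have := hmin _ this
      linarith
  have := hres.neg
  rwa [neg_neg] at this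

def coordL (i : Fin 2) : Euc 2 →ₗ[ℝ] ℝ where
  toFun := fun x => x i
  map_add' := fun _ _ => rfl
  map_smul' := fun _ _ => rfl

lemma coordL_cont (i : Fin 2) : Continuous (fun x : Euc 2 => x i) := by
  have h := (coordL i).continuous_of_finiteDimensional
  exact h

lemma slice_package {S' : Finset (Euc 2)} (hZ : ∀ y ∈ S', ∀ i, ∃ a : ℤ, y i = (a:ℝ))
    {mI MI : ℤ} (hlow : ∃ p ∈ S', p 0 = (mI:ℝ)) (hhigh : ∃ q ∈ S', q 0 = (MI:ℝ))
    {m : ℤ} (hm1 : mI ≤ m) (hm2 : m ≤ MI) :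
    ∃ a b : ℝ, a ≤ b ∧ RatPt a ∧ RatPt b ∧
      ∀ t : ℝ, (pt (m:ℝ) t ∈ convexHull ℝ (S' : Set (Euc 2))) ↔ (a ≤ t ∧ t ≤ b) := by
  classical
  set P' := convexHull ℝ (S' : Set (Euc 2)) with hP'
  have hcomp : IsCompact P' := S'.finite_toSet.isCompact_convexHull ℝ
  have hconv : Convex ℝ P' := convex_convexHull ℝ _
  set T := {t : ℝ | pt (m:ℝ) t ∈ P'} with hT
  have hTmapeq : (fun t : ℝ => pt (m:ℝ) t) = fun t => pt (m:ℝ) 0 + t • pt 0 1 := by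
    funext t
    apply euc_ext
    · rw [pt_apply0, PiLp.add_apply, euc_smul_apply, pt_apply0, pt_apply0]; ring
    · rw [pt_apply1, PiLp.add_apply, euc_smul_apply, pt_apply1, pt_apply1]; ring
  have hTmap : Continuous (fun t : ℝ => pt (m:ℝ) t) := by
    rw [hTmapeq]
    exact continuous_const.add (continuous_id.smul continuous_const)
  have hTclosed : IsClosed T := hcomp.isClosed.preimage hTmap
  have hTne : T.Nonempty := by
    obtain ⟨p, hp, hp0⟩ := hlow
    obtain ⟨q, hq, hq0⟩ := hhigh
    by_cases hmm : mI = MI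
    · refine ⟨p 1, ?_⟩
      have hm' : m = mI := by omega
      show pt (m:ℝ) (p 1) ∈ P'
      have : pt (m:ℝ) (p 1) = p := euc_ext (by rw [pt_apply0, hp0, hm']) rfl
      rw [this]
      exact subset_convexHull ℝ _ hp
    · have hlt : (mI:ℝ) < MI := by exact_mod_cast lt_of_le_of_ne (by omega) hmm
      set lam := ((m:ℝ) - mI)/((MI:ℝ) - mI) with hlam
      have hden : (MI:ℝ) - mI > 0 := by linarith
      have hl0 : 0 ≤ lam := div_nonneg (by exact_mod_cast sub_nonneg.mpr hm1) hden.le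
      have hl1 : lam ≤ 1 := by
        rw [hlam, div_le_one hden]
        have : (m:ℝ) ≤ MI := by exact_mod_cast hm2
        linarith
      set y := (1 - lam) • p + lam • q with hy
      have hymem : y ∈ P' :=
        hconv (subset_convexHull ℝ _ hp) (subset_convexHull ℝ _ hq) (by linarith) hl0 (by ring)
      refine ⟨y 1, ?_⟩
      show pt (m:ℝ) (y 1) ∈ P'
      have : pt (m:ℝ) (y 1) = y := by
        apply euc_ext
        · rw [pt_apply0, hy, PiLp.add_apply, euc_smul_apply, euc_smul_apply, hp0, hq0, hlam]
          field_simp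
          ring
        · rw [pt_apply1]
      rw [this]; exact hymem
  have hTsub : T ⊆ (fun x : Euc 2 => x 1) '' P' := by
    intro t ht
    exact ⟨pt (m:ℝ) t, ht, pt_apply1 _ _⟩
  have himgcomp : IsCompact ((fun x : Euc 2 => x 1) '' P') := hcomp.image (coordL_cont 1)
  have hbddA : BddAbove T := himgcomp.bddAbove.mono hTsub
  have hbddB : BddBelow T := himgcomp.bddBelow.mono hTsub
  set a := sInf T with ha
  set b := sSup T with hb
  have hbT : b ∈ T := hTclosed.csSup_mem hTne hbddA
  have haT : a ∈ T := hTclosed.csInf_mem hTne hbddB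
  have hab : a ≤ b := csInf_le_csSup hTne hbddB hbddA
  have hiff : ∀ t : ℝ, (pt (m:ℝ) t ∈ P') ↔ (a ≤ t ∧ t ≤ b) := by
    intro t
    constructor
    · intro ht
      exact ⟨csInf_le hbddB ht, le_csSup hbddA ht⟩
    · rintro ⟨h1, h2⟩
      by_cases hab' : a = b
      · have ht' : t = a := le_antisymm (hab' ▸ h2) h1
        rw [ht']; exact haT
      · have hablt : a < b := lt_of_le_of_ne hab hab'
        set c := (t - a)/(b - a) with hc
        have hc0 : 0 ≤ c := div_nonneg (by linarith) (by linarith)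
        have hc1 : c ≤ 1 := by rw [hc, div_le_one (by linarith)]; linarith
        have hmem : (1 - c) • pt (m:ℝ) a + c • pt (m:ℝ) b ∈ P' :=
          hconv haT hbT (by linarith) hc0 (by ring)
        have heq : pt (m:ℝ) t = (1 - c) • pt (m:ℝ) a + c • pt (m:ℝ) b := by
          apply euc_ext
          · rw [pt_apply0, PiLp.add_apply, euc_smul_apply, euc_smul_apply,
              pt_apply0, pt_apply0]; ring
          · rw [pt_apply1, PiLp.add_apply, euc_smul_apply, euc_smul_apply,
              pt_apply1, pt_apply1]
            have hcb : c * (b - a) = t - a := by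
              rw [hc, div_mul_eq_mul_div, mul_div_assoc,
                div_self (by linarith : b - a ≠ 0), mul_one]
            nlinarith [hcb]
        rw [heq]; exact hmem
  refine ⟨a, b, hab, ?_, ?_, hiff⟩
  · exact bot_rat hZ haT (fun t ht => csInf_le hbddB ht)
  · exact top_rat hZ hbT (fun t ht => le_csSup hbddA ht)

lemma hull_count (S' : Finset (Euc 2)) (hne : S'.Nonempty)
    (hZ : ∀ y ∈ S', ∀ i, ∃ a : ℤ, y i = (a:ℝ)) :
    ∃ (mI MI : ℤ) (A : ℝ) (D : ℕ), 0 < D ∧ mI ≤ MI ∧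
      (∀ u ∈ convexHull ℝ (S' : Set (Euc 2)), (mI:ℝ) ≤ u 0 ∧ u 0 ≤ (MI:ℝ)) ∧
      (∃ u ∈ S', u 0 = (mI:ℝ)) ∧ (∃ u ∈ S', u 0 = (MI:ℝ)) ∧
      ∀ N : ℕ, 0 < N → D ∣ N →
        (({u | u ∈ convexHull ℝ (S' : Set (Euc 2)) ∧ (∃ a : ℤ, u 0 = (a:ℝ)) ∧
          (∃ b : ℤ, (N:ℝ) * u 1 = (b:ℝ))} : Set (Euc 2)).ncard : ℝ)
          = (N:ℝ) * A + ((MI:ℝ) - (mI:ℝ) + 1) := by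
  classical
  obtain ⟨p, hp, hpinf⟩ := Finset.exists_mem_eq_inf' hne (fun y : Euc 2 => y 0)
  obtain ⟨q, hq, hqsup⟩ := Finset.exists_mem_eq_sup' hne (fun y : Euc 2 => y 0)
  obtain ⟨mI, hpmI⟩ := hZ p hp 0
  obtain ⟨MI, hqMI⟩ := hZ q hq 0
  have hlowB : ∀ y ∈ S', (mI:ℝ) ≤ y 0 := by
    intro y hy
    rw [← hpmI, ← hpinf]
    exact Finset.inf'_le _ hy
  have hhighB : ∀ y ∈ S', y 0 ≤ (MI:ℝ) := by
    intro y hy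
    rw [← hqMI, ← hqsup]
    exact Finset.le_sup' (fun y : Euc 2 => y 0) hy
  have hmle : mI ≤ MI := by
    have := le_trans (hlowB p hp) (hhighB p hp)
    exact_mod_cast this
  have hslab : ∀ u ∈ convexHull ℝ (S' : Set (Euc 2)), (mI:ℝ) ≤ u 0 ∧ u 0 ≤ (MI:ℝ) := by
    have hconvslab : Convex ℝ {u : Euc 2 | (mI:ℝ) ≤ u 0 ∧ u 0 ≤ (MI:ℝ)} := by
      intro x hx y hy a b ha hb hab
      obtain ⟨hx1, hx2⟩ := hx
      obtain ⟨hy1, hy2⟩ := hy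
      have k1 : a * (mI:ℝ) ≤ a * x 0 := mul_le_mul_of_nonneg_left hx1 ha
      have k2 : b * (mI:ℝ) ≤ b * y 0 := mul_le_mul_of_nonneg_left hy1 hb
      have k3 : a * x 0 ≤ a * (MI:ℝ) := mul_le_mul_of_nonneg_left hx2 ha
      have k4 : b * y 0 ≤ b * (MI:ℝ) := mul_le_mul_of_nonneg_left hy2 hb
      have hsm : (a + b) * (mI:ℝ) = mI := by rw [hab, one_mul]
      have hsM : (a + b) * (MI:ℝ) = MI := by rw [hab, one_mul]
      constructor <;> rw [PiLp.add_apply, euc_smul_apply, euc_smul_apply] <;>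
        linarith [k1, k2, k3, k4, hsm, hsM]
    intro u hu
    have hsub : (S' : Set (Euc 2)) ⊆ {u : Euc 2 | (mI:ℝ) ≤ u 0 ∧ u 0 ≤ (MI:ℝ)} :=
      fun y hy => ⟨hlowB y hy, hhighB y hy⟩
    exact convexHull_min hsub hconvslab hu
  have hsl' : ∀ m : ℤ, ∃ a b : ℝ, ∃ ca cb : ℤ, ∃ dda ddb : ℕ, 0 < dda ∧ 0 < ddb ∧
      (dda:ℝ) * a = ca ∧ (ddb:ℝ) * b = cb ∧
      (mI ≤ m → m ≤ MI → (a ≤ b ∧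
        ∀ t : ℝ, (pt (m:ℝ) t ∈ convexHull ℝ (S' : Set (Euc 2))) ↔ (a ≤ t ∧ t ≤ b))) := by
    intro m
    by_cases h : mI ≤ m ∧ m ≤ MI
    · obtain ⟨a, b, hab, ⟨ca, dda, hda, hca⟩, ⟨cb, ddb, hdb, hcb⟩, hiff⟩ :=
        slice_package hZ ⟨p, hp, hpmI⟩ ⟨q, hq, hqMI⟩ h.1 h.2
      exact ⟨a, b, ca, cb, dda, ddb, hda, hdb, hca, hcb, fun _ _ => ⟨hab, hiff⟩⟩
    · exact ⟨0, 0, 0, 0, 1, 1, one_pos, one_pos, by simp, by simp,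
        fun h1 h2 => absurd ⟨h1, h2⟩ h⟩
  choose α β ca cb dda ddb hda hdb hca hcb hmain using hsl'
  set A := ∑ m ∈ Finset.Icc mI MI, (β m - α m) with hA
  set D := ∏ m ∈ Finset.Icc mI MI, (dda m * ddb m) with hD
  have hDpos : 0 < D := Finset.prod_pos (fun m _ => mul_pos (hda m) (hdb m))
  refine ⟨mI, MI, A, D, hDpos, hmle, hslab, ⟨p, hp, hpmI⟩, ⟨q, hq, hqMI⟩, ?_⟩
  intro N hN hDN
  have hNne : (N:ℝ) ≠ 0 := by positivity
  -- integer values of N*α, N*β on the relevant range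
  have hint : ∀ m : ℤ, ∃ aN bN : ℤ, mI ≤ m → m ≤ MI →
      ((aN:ℝ) = (N:ℝ) * α m ∧ (bN:ℝ) = (N:ℝ) * β m) := by
    intro m
    by_cases h : mI ≤ m ∧ m ≤ MI
    · have hdvdD : dda m * ddb m ∣ D := Finset.dvd_prod_of_mem _ (Finset.mem_Icc.mpr h)
      have hdvdaN : dda m ∣ N := dvd_trans (dvd_trans (dvd_mul_right _ _) hdvdD) hDN
      have hdvdbN : ddb m ∣ N := dvd_trans (dvd_trans (dvd_mul_left _ _) hdvdD) hDN
      obtain ⟨k, hk⟩ := hdvdaN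
      obtain ⟨l, hl⟩ := hdvdbN
      refine ⟨k * ca m, l * cb m, fun _ _ => ⟨?_, ?_⟩⟩
      · have : ((N:ℕ):ℝ) = (dda m : ℝ) * k := by rw [hk]; push_cast; ring
        rw [this]
        push_cast
        rw [mul_assoc, ← hca m]
        ring
      · have : ((N:ℕ):ℝ) = (ddb m : ℝ) * l := by rw [hl]; push_cast; ring
        rw [this]
        push_cast
        rw [mul_assoc, ← hcb m]
        ring
    · exact ⟨0, 0, fun h1 h2 => absurd ⟨h1, h2⟩ h⟩
  choose aN bN haNbN using hint
  -- the finset of relevant points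
  set W' : Finset (Euc 2) := (Finset.Icc mI MI).biUnion
    (fun m => (Finset.Icc (aN m) (bN m)).image (fun j : ℤ => pt (m:ℝ) ((j:ℝ)/(N:ℝ)))) with hW'
  have hseteq : {u | u ∈ convexHull ℝ (S' : Set (Euc 2)) ∧ (∃ a : ℤ, u 0 = (a:ℝ)) ∧
      (∃ b : ℤ, (N:ℝ) * u 1 = (b:ℝ))} = (W' : Set (Euc 2)) := by
    ext u
    rw [hW']
    simp only [Set.mem_setOf_eq, Finset.mem_coe, Finset.mem_biUnion]
    constructor
    · rintro ⟨huP, ⟨a, ha⟩, ⟨b, hb⟩⟩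
      have hslabu := hslab u huP
      have ham : mI ≤ a ∧ a ≤ MI := by
        rw [ha] at hslabu
        exact ⟨by exact_mod_cast hslabu.1, Int.cast_le.mp hslabu.2⟩
      have hueq : u = pt ((a:ℤ):ℝ) ((b:ℝ)/(N:ℝ)) := by
        apply euc_ext
        · rw [pt_apply0, ha]
        · rw [pt_apply1, eq_div_iff hNne, mul_comm, hb]
      have hmem2 : (α a ≤ (b:ℝ)/(N:ℝ) ∧ (b:ℝ)/(N:ℝ) ≤ β a) := by
        rw [← ((hmain a ham.1 ham.2).2 ((b:ℝ)/(N:ℝ)))]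
        rw [← hueq]
        exact huP
      obtain ⟨haN, hbN⟩ := haNbN a ham.1 ham.2
      refine ⟨a, Finset.mem_Icc.mpr ham, ?_⟩
      rw [Finset.mem_image]
      refine ⟨b, Finset.mem_Icc.mpr ⟨?_, ?_⟩, hueq.symm⟩
      · have : (aN a : ℝ) ≤ b := by
          rw [haN]
          calc (N:ℝ) * α a ≤ (N:ℝ) * ((b:ℝ)/(N:ℝ)) := by
                apply mul_le_mul_of_nonneg_left hmem2.1 (by positivity)
            _ = b := by field_simp
        exact_mod_cast this
      · have : (b:ℝ) ≤ bN a := by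
          rw [hbN]
          calc (b:ℝ) = (N:ℝ) * ((b:ℝ)/(N:ℝ)) := by field_simp
            _ ≤ (N:ℝ) * β a := by
                apply mul_le_mul_of_nonneg_left hmem2.2 (by positivity)
        exact_mod_cast this
    · rintro ⟨m, hm, hu⟩
      rw [Finset.mem_image] at hu
      obtain ⟨j, hj, rfl⟩ := hu
      obtain ⟨hm1, hm2⟩ := Finset.mem_Icc.mp hm
      obtain ⟨hj1, hj2⟩ := Finset.mem_Icc.mp hj
      obtain ⟨haN, hbN⟩ := haNbN m hm1 hm2
      have hNpos : (0:ℝ) < (N:ℝ) := by positivity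
      have hα : α m ≤ (j:ℝ)/(N:ℝ) := by
        rw [le_div_iff₀ hNpos]
        have h' : (aN m : ℝ) ≤ (j:ℝ) := by exact_mod_cast hj1
        nlinarith [haN]
      have hβ : (j:ℝ)/(N:ℝ) ≤ β m := by
        rw [div_le_iff₀ hNpos]
        have h' : (j:ℝ) ≤ (bN m : ℝ) := by exact_mod_cast hj2
        nlinarith [hbN]
      refine ⟨((hmain m hm1 hm2).2 _).mpr ⟨hα, hβ⟩, ⟨m, pt_apply0 _ _⟩, ⟨j, ?_⟩⟩
      rw [pt_apply1]
      field_simp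
  -- cardinality computation
  rw [hseteq, Set.ncard_coe_finset, hW']
  have hdisj : ∀ m₁ ∈ Finset.Icc mI MI, ∀ m₂ ∈ Finset.Icc mI MI, m₁ ≠ m₂ →
      Disjoint ((Finset.Icc (aN m₁) (bN m₁)).image (fun j : ℤ => pt (m₁:ℝ) ((j:ℝ)/(N:ℝ))))
        ((Finset.Icc (aN m₂) (bN m₂)).image (fun j : ℤ => pt (m₂:ℝ) ((j:ℝ)/(N:ℝ)))) := by
    intro m₁ _ m₂ _ hne12
    rw [Finset.disjoint_left]
    intro u hu1 hu2
    rw [Finset.mem_image] at hu1 hu2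
    obtain ⟨j₁, _, hj1e⟩ := hu1
    obtain ⟨j₂, _, hj2e⟩ := hu2
    apply hne12
    have : ((m₁:ℤ):ℝ) = ((m₂:ℤ):ℝ) := by
      rw [← pt_apply0 (m₁:ℝ) ((j₁:ℝ)/(N:ℝ)), ← pt_apply0 (m₂:ℝ) ((j₂:ℝ)/(N:ℝ)), hj1e, hj2e]
    exact_mod_cast this
  rw [Finset.card_biUnion hdisj]
  have hNpos : (0:ℝ) < (N:ℝ) := by positivity
  have hcard : ∀ m ∈ Finset.Icc mI MI,
      (((Finset.Icc (aN m) (bN m)).image (fun j : ℤ => pt (m:ℝ) ((j:ℝ)/(N:ℝ)))).card : ℝ)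
        = (N:ℝ) * β m - (N:ℝ) * α m + 1 := by
    intro m hm
    obtain ⟨hm1, hm2⟩ := Finset.mem_Icc.mp hm
    obtain ⟨haN, hbN⟩ := haNbN m hm1 hm2
    have hinj : Set.InjOn (fun j : ℤ => pt (m:ℝ) ((j:ℝ)/(N:ℝ)))
        ↑(Finset.Icc (aN m) (bN m)) := by
      intro j₁ _ j₂ _ hje
      have h1 : (j₁:ℝ)/(N:ℝ) = (j₂:ℝ)/(N:ℝ) := congrArg (fun u : Euc 2 => u 1) hje
      have h2 : (j₁:ℝ) = (j₂:ℝ) := by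
        field_simp at h1
        exact_mod_cast h1
      exact_mod_cast h2
    rw [Finset.card_image_of_injOn hinj]
    have habN : aN m ≤ bN m + 1 := by
      have : (aN m : ℝ) ≤ (bN m : ℝ) := by
        rw [haN, hbN]
        have := (hmain m hm1 hm2).1
        nlinarith
      have : aN m ≤ bN m := by exact_mod_cast this
      omega
    have := Int.card_Icc_of_le (aN m) (bN m) habN
    have hcast : ((Finset.Icc (aN m) (bN m)).card : ℝ) = ((bN m : ℝ) + 1 - aN m) := by
      exact_mod_cast congrArg (fun n : ℤ => (n:ℝ)) this
    rw [hcast, haN, hbN]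
    ring
  calc ((∑ m ∈ Finset.Icc mI MI,
        ((Finset.Icc (aN m) (bN m)).image (fun j : ℤ => pt (m:ℝ) ((j:ℝ)/(N:ℝ)))).card : ℕ) : ℝ)
      = ∑ m ∈ Finset.Icc mI MI,
        (((Finset.Icc (aN m) (bN m)).image (fun j : ℤ => pt (m:ℝ) ((j:ℝ)/(N:ℝ)))).card : ℝ) := by
        push_cast
        rfl
    _ = ∑ m ∈ Finset.Icc mI MI, ((N:ℝ) * β m - (N:ℝ) * α m + 1) :=
        Finset.sum_congr rfl hcard
    _ = (N:ℝ) * A + ((MI:ℝ) - (mI:ℝ) + 1) := by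
        rw [hA, Finset.mul_sum, Finset.sum_add_distrib]
        congr 1
        · exact Finset.sum_congr rfl (fun m _ => by ring)
        · rw [Finset.sum_const, nsmul_eq_mul, mul_one]
          have h1 : (Finset.Icc mI MI).card = (MI + 1 - mI).toNat := Int.card_Icc mI MI
          have h2 : ((MI + 1 - mI).toNat : ℤ) = MI + 1 - mI := Int.toNat_of_nonneg (by omega)
          rw [h1]
          have : (((MI + 1 - mI).toNat : ℕ) : ℝ) = ((MI:ℝ) + 1 - mI) := by
            exact_mod_cast congrArg (fun n : ℤ => (n:ℝ)) h2
          rw [this]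
          ring

lemma dotZ_eq (z : Fin 2 → ℤ) (x : Euc 2) :
    dotZ z x = (z 0 : ℝ) * x 0 + (z 1 : ℝ) * x 1 := by
  unfold dotZ; rw [Fin.sum_univ_two]

lemma main_per_poly (S : Finset (Euc 2)) (hSne : S.Nonempty) (hSZ : ∀ x ∈ S, IsZ x)
    (z : Fin 2 → ℤ) (hz : ((z 0 : ℝ))^2 + ((z 1 : ℝ))^2 ≠ 0) :
    ∃ (WP : ℤ) (A : ℝ) (D : ℕ), 0 < D ∧
      latticeWidth z (convexHull ℝ (S : Set (Euc 2))) = (WP : ℝ) ∧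
      ∀ N : ℕ, 0 < N → D ∣ N →
        (({x | x ∈ (lmap (z 0 : ℝ) (z 1 : ℝ) (-((N:ℝ) * (z 1 : ℝ))) ((N:ℝ) * (z 0 : ℝ))) ''
            (convexHull ℝ (S : Set (Euc 2))) ∧ IsZ x}).ncard : ℝ)
          = (N:ℝ) * A + ((WP:ℝ) + 1) := by
  classical
  set ψ := lmap (z 0 : ℝ) (z 1 : ℝ) (-(z 1 : ℝ)) (z 0 : ℝ) with hψ
  have hψinj : Function.Injective ψ := by
    apply lmap_injective
    rw [show (z 0:ℝ) * (z 0:ℝ) - (z 1:ℝ) * (-(z 1:ℝ)) = (z 0:ℝ)^2 + (z 1:ℝ)^2 by ring]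
    exact hz
  set S' := S.image ψ with hS'
  have hS'ne : S'.Nonempty := hSne.image ψ
  have hS'Z : ∀ y ∈ S', ∀ i, ∃ a : ℤ, y i = (a:ℝ) := by
    intro y hy i
    obtain ⟨x, hx, rfl⟩ := Finset.mem_image.mp hy
    obtain ⟨a0, ha0⟩ := hSZ x hx 0
    obtain ⟨a1, ha1⟩ := hSZ x hx 1
    fin_cases i
    · refine ⟨z 0 * a0 + z 1 * a1, ?_⟩
      show (ψ x) 0 = _
      rw [hψ, lmap_apply0, ha0, ha1]
      push_cast; ring
    · refine ⟨-(z 1) * a0 + z 0 * a1, ?_⟩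
      show (ψ x) 1 = _
      rw [hψ, lmap_apply1, ha0, ha1]
      push_cast; ring
  have hhull : ψ '' (convexHull ℝ (S : Set (Euc 2))) = convexHull ℝ (S' : Set (Euc 2)) := by
    rw [ψ.image_convexHull, hS', Finset.coe_image]
  obtain ⟨mI, MI, A, D, hD, hmle, hslab, hlow, hhigh, hcount⟩ := hull_count S' hS'ne hS'Z
  have hdotψ : ∀ x : Euc 2, dotZ z x = (ψ x) 0 := by
    intro x
    rw [dotZ_eq, hψ, lmap_apply0]
  refine ⟨MI - mI, A, D, hD, ?_, ?_⟩
  · -- width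
    have hgr : IsGreatest {r | ∃ x ∈ convexHull ℝ (S : Set (Euc 2)),
        ∃ y ∈ convexHull ℝ (S : Set (Euc 2)), dotZ z x - dotZ z y = r} (((MI - mI : ℤ)):ℝ) := by
      constructor
      · obtain ⟨uh, huh, huh0⟩ := hhigh
        obtain ⟨ul, hul, hul0⟩ := hlow
        obtain ⟨xh, hxh, hxh'⟩ := Finset.mem_image.mp (hS' ▸ huh)
        obtain ⟨xl, hxl, hxl'⟩ := Finset.mem_image.mp (hS' ▸ hul)
        refine ⟨xh, subset_convexHull ℝ _ hxh, xl, subset_convexHull ℝ _ hxl, ?_⟩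
        rw [hdotψ, hdotψ, hxh', hxl', huh0, hul0]
        push_cast; ring
      · rintro r ⟨x, hx, y, hy, rfl⟩
        have h1 := hslab (ψ x) (hhull ▸ Set.mem_image_of_mem ψ hx)
        have h2 := hslab (ψ y) (hhull ▸ Set.mem_image_of_mem ψ hy)
        rw [hdotψ, hdotψ]
        push_cast
        linarith [h1.1, h1.2, h2.1, h2.2]
    unfold latticeWidth
    rw [hgr.csSup_eq]
  · -- counting
    intro N hN hDN
    have hNR : ((N:ℕ):ℝ) ≠ 0 := by positivity
    set π := lmap (z 0 : ℝ) (z 1 : ℝ) (-((N:ℝ) * (z 1 : ℝ))) ((N:ℝ) * (z 0 : ℝ)) with hπ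
    set DN := lmap 1 0 0 (N:ℝ) with hDNdef
    have hDNinj : Function.Injective DN := by
      apply lmap_injective
      rw [show (1:ℝ) * (N:ℝ) - 0 * 0 = (N:ℝ) by ring]
      exact hNR
    have hcompπ : ∀ x : Euc 2, π x = DN (ψ x) := by
      intro x
      apply euc_ext
      · rw [hπ, lmap_apply0, hDNdef, lmap_apply0, hψ, lmap_apply0, lmap_apply1]; ring
      · rw [hπ, lmap_apply1, hDNdef, lmap_apply1, hψ, lmap_apply0, lmap_apply1]; ring
    have hseteq : {x | x ∈ π '' (convexHull ℝ (S : Set (Euc 2))) ∧ IsZ x}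
        = DN '' {u | u ∈ convexHull ℝ (S' : Set (Euc 2)) ∧ (∃ a : ℤ, u 0 = (a:ℝ)) ∧
            (∃ b : ℤ, (N:ℝ) * u 1 = (b:ℝ))} := by
      ext x
      constructor
      · rintro ⟨⟨y, hyP, rfl⟩, hZx⟩
        refine ⟨ψ y, ⟨hhull ▸ Set.mem_image_of_mem ψ hyP, ?_, ?_⟩, (hcompπ y).symm⟩
        · obtain ⟨a, ha⟩ := hZx 0
          refine ⟨a, ?_⟩
          have : (π y) 0 = (ψ y) 0 := by
            rw [hcompπ y, hDNdef, lmap_apply0]; ring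
          rw [← this, ha]
        · obtain ⟨b, hb⟩ := hZx 1
          refine ⟨b, ?_⟩
          have : (π y) 1 = (N:ℝ) * (ψ y) 1 := by
            rw [hcompπ y, hDNdef, lmap_apply1]; ring
          rw [← this, hb]
      · rintro ⟨u, ⟨huP, ⟨a, ha⟩, ⟨b, hb⟩⟩, rfl⟩
        obtain ⟨y, hyP, rfl⟩ := hhull ▸ huP
        constructor
        · exact ⟨y, hyP, hcompπ y⟩
        · intro i
          fin_cases i
          · refine ⟨a, ?_⟩
            show (DN (ψ y)) 0 = _
            rw [hDNdef, lmap_apply0, ← ha]; ring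
          · refine ⟨b, ?_⟩
            show (DN (ψ y)) 1 = _
            rw [hDNdef, lmap_apply1, ← hb]; ring
    rw [hseteq, Set.ncard_image_of_injective _ hDNinj]
    rw [hcount N hN hDN]
    push_cast; ring


/-- Corollary 2: 2-dimensional lattice polygons with the same universal counting
function have the same lattice width in every direction `z ∈ ℤ²`. -/
theorem statement5 (P Q : Set (Euc 2))
    (hP : IsLatticePolytope P) (hQ : IsLatticePolytope Q)
    (hPdim : (interior P).Nonempty) (hQdim : (interior Q).Nonempty)
    (hUCF : SameUCF P Q) :
    ∀ z : Fin 2 → ℤ, latticeWidth z P = latticeWidth z Q := by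
  intro z
  obtain ⟨S, hSne, hSZ, rfl⟩ := hP
  obtain ⟨T, hTne, hTZ, rfl⟩ := hQ
  by_cases hz : z 0 = 0 ∧ z 1 = 0
  · have hdot : ∀ x : Euc 2, dotZ z x = 0 := by
      intro x; rw [dotZ_eq, hz.1, hz.2]; push_cast; ring
    have hset : ∀ (U : Set (Euc 2)), U.Nonempty →
        {r | ∃ x ∈ U, ∃ y ∈ U, dotZ z x - dotZ z y = r} = {0} := by
      rintro U ⟨u, hu⟩
      ext r
      simp only [Set.mem_setOf_eq, Set.mem_singleton_iff]
      constructor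
      · rintro ⟨x, _, y, _, rfl⟩; rw [hdot, hdot]; ring
      · rintro rfl; exact ⟨u, hu, u, hu, by rw [hdot]; ring⟩
    have hPne : (convexHull ℝ (S : Set (Euc 2))).Nonempty := by
      obtain ⟨s, hs⟩ := hSne
      exact ⟨s, subset_convexHull ℝ _ (Finset.mem_coe.mpr hs)⟩
    have hQne : (convexHull ℝ (T : Set (Euc 2))).Nonempty := by
      obtain ⟨s, hs⟩ := hTne
      exact ⟨s, subset_convexHull ℝ _ (Finset.mem_coe.mpr hs)⟩
    unfold latticeWidth
    rw [hset _ hPne, hset _ hQne]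
  · have hzz : ((z 0:ℝ))^2 + ((z 1:ℝ))^2 ≠ 0 := by
      have h1 : z 0 ≠ 0 ∨ z 1 ≠ 0 := by tauto
      rcases h1 with h | h
      · have h' : (z 0:ℝ) ≠ 0 := Int.cast_ne_zero.mpr h
        positivity
      · have h' : (z 1:ℝ) ≠ 0 := Int.cast_ne_zero.mpr h
        positivity
    obtain ⟨WP, AP, DP, hDP, hWPeq, hCP⟩ := main_per_poly S hSne hSZ z hzz
    obtain ⟨WQ, AQ, DQ, hDQ, hWQeq, hCQ⟩ := main_per_poly T hTne hTZ z hzz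
    have key : ∀ N : ℕ, 0 < N → DP ∣ N → DQ ∣ N →
        (N:ℝ) * AP + ((WP:ℝ)+1) = (N:ℝ) * AQ + ((WQ:ℝ)+1) := by
      intro N hN hdp hdq
      set π := lmap (z 0 : ℝ) (z 1 : ℝ) (-((N:ℝ) * (z 1 : ℝ))) ((N:ℝ) * (z 0 : ℝ)) with hπ
      have hπinj : Function.Injective π := by
        apply lmap_injective
        rw [show (z 0:ℝ) * ((N:ℝ)*(z 0:ℝ)) - (z 1:ℝ) * (-((N:ℝ)*(z 1:ℝ)))
          = (N:ℝ) * (((z 0:ℝ))^2 + ((z 1:ℝ))^2) by ring]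
        exact mul_ne_zero (by positivity) hzz
      have hπZ : ∀ x, IsZ x → IsZ (π x) := by
        intro x hx
        obtain ⟨a0, ha0⟩ := hx 0
        obtain ⟨a1, ha1⟩ := hx 1
        intro i
        fin_cases i
        · exact ⟨z 0 * a0 + z 1 * a1, by
            show (π x) 0 = _
            rw [hπ, lmap_apply0, ha0, ha1]; push_cast; ring⟩
        · exact ⟨-((N:ℤ) * z 1 * a0) + (N:ℤ) * z 0 * a1, by
            show (π x) 1 = _
            rw [hπ, lmap_apply1, ha0, ha1]; push_cast; ring⟩
      have hU := hUCF π hπinj hπZ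
      rw [← hCP N hN hdp, ← hCQ N hN hdq]
      exact congrArg (fun n : ℕ => (n:ℝ)) hU
    have hN1 : 0 < DP * DQ := mul_pos hDP hDQ
    have e1 := key (DP * DQ) hN1 ⟨DQ, rfl⟩ ⟨DP, mul_comm _ _⟩
    have e2 := key (2 * (DP * DQ)) (by positivity) ⟨2*DQ, by ring⟩ ⟨2*DP, by ring⟩
    push_cast at e1 e2
    have hXY : ((DP:ℝ)*(DQ:ℝ)) * AP = ((DP:ℝ)*(DQ:ℝ)) * AQ := by nlinarith [e1, e2]
    have hDQR : (0:ℝ) < (DP:ℝ)*(DQ:ℝ) := by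
      have : (0:ℝ) < (DP:ℝ) := by exact_mod_cast hDP
      have : (0:ℝ) < (DQ:ℝ) := by exact_mod_cast hDQ
      positivity
    have hAPQ : AP = AQ := mul_left_cancel₀ (ne_of_gt hDQR) hXY
    rw [hAPQ] at e1
    have hW : (WP:ℝ) = (WQ:ℝ) := by linarith [e1]
    rw [hWPeq, hWQeq, hW]
end
end

section
/- Let P, Q, P', Q' be 2-dimensional lattice polygons in ℝ² and t ∈ ℤ² a nonzero vector such that P = P' + [0,t] and Q = Q' + [0,t], where [0,t] is the segment from the origin to t and + denotes Minkowski addition. If P and Q have the same universal counting function, then P' and Q' have the same universal counting function. -/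
open MeasureTheory Set Pointwise

noncomputable section

namespace S9


lemma card_Icc_add_nat (l h : ℤ) (k : ℕ) (hlh : l ≤ h + 1) :
    (Finset.Icc l (h + k)).card = (Finset.Icc l h).card + k := by
  rw [Int.card_Icc, Int.card_Icc]
  have h1 : h + (k:ℤ) + 1 - l = (h + 1 - l) + k := by ring
  rw [h1, Int.toNat_add_nat (by omega)]

lemma assembly (W : Set (ℝ × ℝ)) (occ : Finset ℤ) (a b : ℤ → ℝ) (N : ℕ) (hN : 0 < N)
    (hA1 : ∀ p ∈ W, ∀ k : ℤ, p.2 = (k : ℝ) → k ∈ occ)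
    (hA2 : ∀ c ∈ occ, {r : ℝ | (r, (c : ℝ)) ∈ W} = Set.Icc (a c) (b c)) :
    Set.ncard {p : ℝ × ℝ | p ∈ W ∧ (∃ m : ℤ, (N : ℝ) * p.1 = (m : ℝ)) ∧ (∃ k : ℤ, p.2 = (k : ℝ))}
      = ∑ c ∈ occ, (Finset.Icc ⌈(N : ℝ) * a c⌉ ⌊(N : ℝ) * b c⌋).card := by
  classical
  have hNR : (0:ℝ) < (N:ℝ) := by positivity
  set f : ℤ × ℤ → ℝ × ℝ := fun mc => ((mc.1 : ℝ) / (N:ℝ), (mc.2 : ℝ)) with hf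
  set Zf : Finset (ℤ × ℤ) :=
    occ.biUnion (fun c => (Finset.Icc ⌈(N : ℝ) * a c⌉ ⌊(N : ℝ) * b c⌋).image (fun m => (m, c))) with hZf
  have hmem : ∀ mc : ℤ × ℤ, mc ∈ Zf ↔
      mc.2 ∈ occ ∧ ⌈(N:ℝ) * a mc.2⌉ ≤ mc.1 ∧ mc.1 ≤ ⌊(N:ℝ) * b mc.2⌋ := by
    intro mc
    simp only [hZf, Finset.mem_biUnion, Finset.mem_image, Finset.mem_Icc]
    constructor
    · rintro ⟨c, hc, m, hm, hfm⟩
      have h1 : m = mc.1 ∧ c = mc.2 := by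
        constructor <;> [exact congrArg Prod.fst hfm; exact congrArg Prod.snd hfm]
      rcases h1 with ⟨rfl, rfl⟩
      exact ⟨hc, hm.1, hm.2⟩
    · rintro ⟨hc, h1, h2⟩
      exact ⟨mc.2, hc, mc.1, ⟨h1, h2⟩, rfl⟩
  have hset : {p : ℝ × ℝ | p ∈ W ∧ (∃ m : ℤ, (N : ℝ) * p.1 = (m : ℝ)) ∧ (∃ k : ℤ, p.2 = (k : ℝ))}
      = f '' ↑Zf := by
    ext p
    simp only [Set.mem_setOf_eq, Set.mem_image, Finset.mem_coe]
    constructor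
    · rintro ⟨hW, ⟨m, hm⟩, ⟨k, hk⟩⟩
      have hk2 : k ∈ occ := hA1 p hW k hk
      have hp : p = (p.1, (k:ℝ)) := by rw [← hk]
      have hrow : p.1 ∈ Set.Icc (a k) (b k) := by
        rw [← hA2 k hk2]; exact Set.mem_setOf_eq ▸ (hp ▸ hW)
      refine ⟨(m, k), ?_, ?_⟩
      · rw [hmem]
        refine ⟨hk2, ?_, ?_⟩
        · rw [Int.ceil_le, ← hm]
          exact mul_le_mul_of_nonneg_left hrow.1 hNR.le
        · rw [Int.le_floor, ← hm]
          exact mul_le_mul_of_nonneg_left hrow.2 hNR.le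
      · have : (m:ℝ) / (N:ℝ) = p.1 := by
          field_simp [← hm]
          exact hm.symm
        rw [hf]; simp only []
        rw [this, ← hk]
    · rintro ⟨mc, hmc, rfl⟩
      rw [hmem] at hmc
      obtain ⟨hc, h1, h2⟩ := hmc
      have ha : a mc.2 ≤ (mc.1 : ℝ) / (N:ℝ) := by
        rw [le_div_iff₀ hNR, mul_comm]
        exact_mod_cast Int.ceil_le.mp h1
      have hb : (mc.1 : ℝ) / (N:ℝ) ≤ b mc.2 := by
        rw [div_le_iff₀ hNR, mul_comm]
        exact_mod_cast Int.le_floor.mp h2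
      have hW : ((mc.1:ℝ)/(N:ℝ), (mc.2:ℝ)) ∈ W := by
        have := (hA2 mc.2 hc)
        have h3 : (mc.1:ℝ)/(N:ℝ) ∈ {r : ℝ | (r, (mc.2 : ℝ)) ∈ W} := by
          rw [this]; exact ⟨ha, hb⟩
        exact h3
      refine ⟨hW, ⟨mc.1, ?_⟩, ⟨mc.2, rfl⟩⟩
      show (N:ℝ) * ((mc.1:ℝ)/(N:ℝ)) = (mc.1:ℝ)
      field_simp
  rw [hset, Set.ncard_image_of_injective _ ?finj, Set.ncard_coe_finset]
  case finj =>
    intro x y hxy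
    have h2 : (x.2 : ℝ) = (y.2 : ℝ) := congrArg Prod.snd hxy
    have h1 : (x.1 : ℝ)/(N:ℝ) = (y.1 : ℝ)/(N:ℝ) := congrArg Prod.fst hxy
    field_simp at h1
    exact Prod.ext (by exact_mod_cast h1) (by exact_mod_cast h2)
  rw [hZf, Finset.card_biUnion]
  · refine Finset.sum_congr rfl (fun c _ => ?_)
    exact Finset.card_image_of_injective _ (fun m m' h => (Prod.mk.injEq _ _ _ _ ▸ h).1)
  · intro x hx y hy hxy
    simp only [Finset.disjoint_left, Finset.mem_image]
    rintro p ⟨m, _, rfl⟩ ⟨m', _, hm'⟩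
    exact hxy (by exact (Prod.mk.injEq _ _ _ _ ▸ hm').2.symm ▸ rfl)



lemma row_eq_Icc (W : Set (ℝ × ℝ)) (hWc : Convex ℝ W) (hWcp : IsCompact W) (c : ℝ)
    (hne : {r : ℝ | (r, c) ∈ W}.Nonempty) :
    ∃ a b : ℝ, IsLeast {r : ℝ | (r, c) ∈ W} a ∧ IsGreatest {r : ℝ | (r, c) ∈ W} b ∧
      {r : ℝ | (r, c) ∈ W} = Set.Icc a b := by
  set R := {r : ℝ | (r, c) ∈ W} with hR
  have hRconv : Convex ℝ R := by
    intro r1 h1 r2 h2 p q hp hq hpq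
    have h3 := hWc h1 h2 hp hq hpq
    have h4 : p • ((r1 : ℝ), c) + q • ((r2 : ℝ), c) = (p * r1 + q * r2, c) := by
      have : p * c + q * c = c := by rw [← add_mul, hpq, one_mul]
      simp [Prod.ext_iff, smul_eq_mul, this]
    rw [h4] at h3
    exact h3
  have hRimg : R = Prod.fst '' (W ∩ {p : ℝ × ℝ | p.2 = c}) := by
    ext r
    constructor
    · intro h; exact ⟨(r, c), ⟨h, rfl⟩, rfl⟩
    · rintro ⟨p, ⟨hW, h2⟩, rfl⟩
      simp only [Set.mem_setOf_eq] at h2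
      show (p.1, c) ∈ W
      rw [← h2]
      exact hW
  have hRcp : IsCompact R := by
    rw [hRimg]
    exact ((hWcp.inter_right (isClosed_eq continuous_snd continuous_const)).image continuous_fst)
  obtain ⟨a, ha⟩ := hRcp.exists_isLeast hne
  obtain ⟨b, hb⟩ := hRcp.exists_isGreatest hne
  refine ⟨a, b, ha, hb, ?_⟩
  ext r
  constructor
  · intro hr; exact ⟨ha.2 hr, hb.2 hr⟩
  · intro hr; exact (hRconv.ordConnected).out ha.1 hb.1 hr

lemma mem_segment_horiz {g : ℝ} (hg : 0 < g) (z : ℝ × ℝ) :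
    z ∈ segment ℝ (0 : ℝ × ℝ) ((g : ℝ), (0 : ℝ)) ↔ z.2 = 0 ∧ z.1 ∈ Set.Icc 0 g := by
  rw [segment_eq_image]
  simp only [Set.mem_image, smul_zero, zero_add]
  constructor
  · rintro ⟨θ, hθ, rfl⟩
    simp only [Prod.smul_fst, Prod.smul_snd, smul_eq_mul, mul_zero, Set.mem_Icc]
    exact ⟨trivial, ⟨mul_nonneg hθ.1 hg.le, by nlinarith [hθ.1, hθ.2]⟩⟩
  · rintro ⟨h2, h1⟩
    refine ⟨z.1 / g, ⟨div_nonneg h1.1 hg.le, by rw [div_le_one hg]; exact h1.2⟩, ?_⟩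
    have hz : z = (z.1, z.2) := rfl
    rw [hz, h2]
    have : (z.1 / g) • ((g : ℝ), (0:ℝ)) = (z.1, (0:ℝ)) := by
      simp only [Prod.smul_mk, smul_eq_mul, mul_zero]
      rw [div_mul_cancel₀ _ hg.ne']
    rw [this]

lemma row_add_seg (W : Set (ℝ × ℝ)) {g : ℝ} (hg : 0 < g) (c : ℝ) :
    {r : ℝ | (r, c) ∈ W + segment ℝ (0 : ℝ × ℝ) (g, 0)}
      = {r : ℝ | (r, c) ∈ W} + Set.Icc (0 : ℝ) g := by
  ext r
  simp only [Set.mem_setOf_eq, Set.mem_add]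
  constructor
  · rintro ⟨w, hw, z, hz, hsum⟩
    rw [mem_segment_horiz hg] at hz
    have h2 : w.2 + z.2 = c := congrArg Prod.snd hsum
    have hw2 : w.2 = c := by rw [hz.1] at h2; simpa using h2
    refine ⟨w.1, ?_, z.1, hz.2, congrArg Prod.fst hsum⟩
    show (w.1, c) ∈ W
    rw [← hw2]
    exact hw
  · rintro ⟨r', hr', d, hd, rfl⟩
    exact ⟨(r', c), hr', (d, 0), (mem_segment_horiz hg _).mpr ⟨rfl, hd⟩, by simp⟩



lemma exists_rat_of_isGreatest_row (T : Finset (ℝ × ℝ))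
    (hT : ∀ p ∈ T, (∃ m : ℤ, p.1 = (m : ℝ)) ∧ (∃ m : ℤ, p.2 = (m : ℝ)))
    (c : ℤ) (b : ℝ)
    (hb : IsGreatest {r : ℝ | (r, (c : ℝ)) ∈ convexHull ℝ (↑T : Set (ℝ × ℝ))} b) :
    ∃ q : ℚ, b = (q : ℝ) := by
  classical
  obtain ⟨hbmem, hbub⟩ := hb
  have hub : ∀ r : ℝ, (r, (c : ℝ)) ∈ convexHull ℝ (↑T : Set (ℝ × ℝ)) → r ≤ b := fun r hr => hbub hr
  rw [Set.mem_setOf_eq, Finset.convexHull_eq] at hbmem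
  obtain ⟨w, hw0, hw1, hwx⟩ := hbmem
  rw [Finset.centerMass_eq_of_sum_1 _ _ hw1] at hwx
  have hx1 : ∑ y ∈ T, w y * y.1 = b := by
    have h := congrArg Prod.fst hwx
    rw [Prod.fst_sum] at h
    simpa [smul_eq_mul] using h
  have hx2 : ∑ y ∈ T, w y * y.2 = (c : ℝ) := by
    have h := congrArg Prod.snd hwx
    rw [Prod.snd_sum] at h
    simpa [smul_eq_mul] using h
  set Lf := T.filter (fun y => y.2 < (c : ℝ)) with hLf
  set Hf := T.filter (fun y => (c : ℝ) < y.2) with hHf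
  set Of := T.filter (fun y => y.2 = (c : ℝ)) with hOf
  -- three-way split of sums
  have hsplit : ∀ F : ℝ × ℝ → ℝ,
      ∑ y ∈ T, F y = ∑ y ∈ Lf, F y + ∑ y ∈ Of, F y + ∑ y ∈ Hf, F y := by
    intro F
    have h1 := Finset.sum_filter_add_sum_filter_not T (fun y => y.2 < (c : ℝ)) F
    have h2 := Finset.sum_filter_add_sum_filter_not
      (T.filter (fun y => ¬ y.2 < (c : ℝ))) (fun y => y.2 = (c : ℝ)) F
    rw [Finset.filter_filter, Finset.filter_filter] at h2
    have e1 : T.filter (fun y => ¬ y.2 < (c : ℝ) ∧ y.2 = (c : ℝ)) = Of := by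
      apply Finset.filter_congr
      intro y _
      constructor
      · rintro ⟨_, h⟩; exact h
      · intro h; exact ⟨by rw [h]; exact lt_irrefl _, h⟩
    have e2 : T.filter (fun y => ¬ y.2 < (c : ℝ) ∧ ¬ y.2 = (c : ℝ)) = Hf := by
      apply Finset.filter_congr
      intro y _
      constructor
      · rintro ⟨h1', h2'⟩; exact lt_of_le_of_ne (not_lt.mp h1') (Ne.symm h2')
      · intro h; exact ⟨not_lt.mpr h.le, by intro he; rw [he] at h; exact lt_irrefl _ h⟩
    rw [e1, e2] at h2
    rw [← h1, ← h2]
    ring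
  have hbal : ∑ y ∈ T, w y * (y.2 - (c : ℝ)) = 0 := by
    have h : ∑ y ∈ T, w y * (y.2 - (c : ℝ))
        = (∑ y ∈ T, w y * y.2) - (∑ y ∈ T, w y) * (c : ℝ) := by
      rw [Finset.sum_mul, ← Finset.sum_sub_distrib]
      exact Finset.sum_congr rfl fun y _ => by ring
    rw [h, hx2, hw1]; ring
  set m : ℝ := ∑ y ∈ Hf, w y * (y.2 - (c : ℝ)) with hm_def
  have hOzero : ∑ y ∈ Of, w y * (y.2 - (c : ℝ)) = 0 :=
    Finset.sum_eq_zero fun y hy => by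
      rw [(Finset.mem_filter.mp hy).2]; ring
  have hm' : ∑ y ∈ Lf, w y * ((c : ℝ) - y.2) = m := by
    have h := hsplit (fun y => w y * (y.2 - (c : ℝ)))
    rw [hbal, hOzero] at h
    have : ∑ y ∈ Lf, w y * (y.2 - (c:ℝ)) = - m := by linarith
    calc ∑ y ∈ Lf, w y * ((c : ℝ) - y.2) = - ∑ y ∈ Lf, w y * (y.2 - (c:ℝ)) := by
          rw [← Finset.sum_neg_distrib]
          exact Finset.sum_congr rfl fun y _ => by ring
      _ = m := by rw [this]; ring
  have hwT : ∀ y ∈ Lf, 0 ≤ w y := fun y hy => hw0 y (Finset.mem_filter.mp hy).1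
  have hwTH : ∀ y ∈ Hf, 0 ≤ w y := fun y hy => hw0 y (Finset.mem_filter.mp hy).1
  have hwTO : ∀ y ∈ Of, 0 ≤ w y := fun y hy => hw0 y (Finset.mem_filter.mp hy).1
  have hm0 : 0 ≤ m :=
    Finset.sum_nonneg fun y hy =>
      mul_nonneg (hwTH y hy) (by linarith [(Finset.mem_filter.mp hy).2])
  -- feasible values are ≤ b
  have hOfeas : ∀ y ∈ Of, y.1 ≤ b := by
    intro y hy
    obtain ⟨hyT, hyc⟩ := Finset.mem_filter.mp hy
    apply hub
    have : ((y.1 : ℝ), (c : ℝ)) = y := by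
      rw [← hyc]
    rw [this]
    exact subset_convexHull ℝ (↑T : Set (ℝ × ℝ)) hyT
  by_cases hm : m = 0
  · -- all mass at level c
    have hHzero : ∀ y ∈ Hf, w y = 0 := by
      intro y hy
      have h := (Finset.sum_eq_zero_iff_of_nonneg
        (fun y hy => mul_nonneg (hwTH y hy) (by linarith [(Finset.mem_filter.mp hy).2]))).mp hm y hy
      have hpos : 0 < y.2 - (c : ℝ) := by linarith [(Finset.mem_filter.mp hy).2]
      exact (mul_eq_zero.mp h).resolve_right (ne_of_gt hpos)
    have hLzero : ∀ y ∈ Lf, w y = 0 := by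
      intro y hy
      have hmz : ∑ y ∈ Lf, w y * ((c : ℝ) - y.2) = 0 := by rw [hm']; exact hm
      have h := (Finset.sum_eq_zero_iff_of_nonneg
        (fun y hy => mul_nonneg (hwT y hy) (by linarith [(Finset.mem_filter.mp hy).2]))).mp hmz y hy
      have hpos : 0 < (c : ℝ) - y.2 := by linarith [(Finset.mem_filter.mp hy).2]
      exact (mul_eq_zero.mp h).resolve_right (ne_of_gt hpos)
    have hbO : ∑ y ∈ Of, w y * y.1 = b := by
      have h := hsplit (fun y => w y * y.1)
      rw [hx1] at h
      have hL : ∑ y ∈ Lf, w y * y.1 = 0 :=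
        Finset.sum_eq_zero fun y hy => by rw [hLzero y hy]; ring
      have hH : ∑ y ∈ Hf, w y * y.1 = 0 :=
        Finset.sum_eq_zero fun y hy => by rw [hHzero y hy]; ring
      rw [hL, hH] at h
      linarith
    have hw1O : ∑ y ∈ Of, w y = 1 := by
      have h := hsplit w
      rw [hw1] at h
      have hL : ∑ y ∈ Lf, w y = 0 := Finset.sum_eq_zero hLzero
      have hH : ∑ y ∈ Hf, w y = 0 := Finset.sum_eq_zero hHzero
      rw [hL, hH] at h
      linarith
    have hOne : Of.Nonempty := by
      by_contra h
      rw [Finset.not_nonempty_iff_eq_empty.mp h, Finset.sum_empty] at hw1O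
      norm_num at hw1O
    set M := (Of.image (fun y => y.1)).max' (hOne.image _) with hM
    have hMmem := (Of.image (fun y => y.1)).max'_mem (hOne.image _)
    have hMle : M ≤ b := by
      rw [hM]
      apply Finset.max'_le
      intro r hr
      obtain ⟨y, hy, rfl⟩ := Finset.mem_image.mp hr
      exact hOfeas y hy
    have hbM : b ≤ M := by
      rw [← hbO]
      calc ∑ y ∈ Of, w y * y.1 ≤ ∑ y ∈ Of, w y * M := by
            apply Finset.sum_le_sum
            intro y hy
            exact mul_le_mul_of_nonneg_left
              (Finset.le_max' _ _ (Finset.mem_image_of_mem _ hy)) (hwTO y hy)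
        _ = M := by rw [← Finset.sum_mul, hw1O, one_mul]
    have hbeq : b = M := le_antisymm hbM hMle
    obtain ⟨y, hy, hyM⟩ := Finset.mem_image.mp hMmem
    obtain ⟨⟨mi, hmi⟩, _⟩ := hT y (Finset.mem_filter.mp hy).1
    exact ⟨(mi : ℚ), by rw [hbeq, hM, ← hyM, hmi]; push_cast; ring⟩
  · -- m > 0 case
    have hmpos : 0 < m := lt_of_le_of_ne hm0 (Ne.symm hm)
    have hHne : Hf.Nonempty := by
      by_contra h
      exact hm (by rw [hm_def, Finset.not_nonempty_iff_eq_empty.mp h, Finset.sum_empty])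
    have hLne : Lf.Nonempty := by
      by_contra h
      have h0 : ∑ y ∈ Lf, w y * ((c : ℝ) - y.2) = 0 := by
        rw [Finset.not_nonempty_iff_eq_empty.mp h, Finset.sum_empty]
      rw [hm'] at h0
      exact hm h0
    set ch : ℝ × ℝ → ℝ × ℝ → ℝ :=
      fun i j => ((j.2 - (c : ℝ)) * i.1 + ((c : ℝ) - i.2) * j.1) / (j.2 - i.2) with hch
    set CF : Finset ℝ :=
      ((Lf ×ˢ Hf).image (fun ij => ch ij.1 ij.2)) ∪ (Of.image (fun y => y.1)) with hCF
    have hCFne : CF.Nonempty := by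
      rw [hCF]
      exact ((hLne.product hHne).image _).inl
    have hcand_le : ∀ r ∈ CF, r ≤ b := by
      intro r hr
      rw [hCF, Finset.mem_union] at hr
      rcases hr with hr | hr
      · obtain ⟨ij, hij, rfl⟩ := Finset.mem_image.mp hr
        obtain ⟨hi, hj⟩ := Finset.mem_product.mp hij
        have hiT := (Finset.mem_filter.mp hi).1
        have hjT := (Finset.mem_filter.mp hj).1
        have hic : ij.1.2 < (c : ℝ) := (Finset.mem_filter.mp hi).2
        have hjc : (c : ℝ) < ij.2.2 := (Finset.mem_filter.mp hj).2
        have hd : (0:ℝ) < ij.2.2 - ij.1.2 := by linarith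
        set lam := (ij.2.2 - (c : ℝ)) / (ij.2.2 - ij.1.2) with hlame
        set mu := ((c : ℝ) - ij.1.2) / (ij.2.2 - ij.1.2) with hmue
        have hlam : 0 ≤ lam := div_nonneg (by linarith) hd.le
        have hmu : 0 ≤ mu := div_nonneg (by linarith) hd.le
        have hsum : lam + mu = 1 := by
          rw [hlame, hmue, ← add_div,
            show ij.2.2 - (c:ℝ) + ((c:ℝ) - ij.1.2) = ij.2.2 - ij.1.2 by ring,
            div_self hd.ne']
        have hmem : lam • ij.1 + mu • ij.2 ∈ convexHull ℝ (↑T : Set (ℝ × ℝ)) :=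
          (convex_convexHull ℝ _) (subset_convexHull ℝ _ hiT) (subset_convexHull ℝ _ hjT)
            hlam hmu hsum
        have hpt : lam • ij.1 + mu • ij.2 = (ch ij.1 ij.2, (c : ℝ)) := by
          have h1 : (lam • ij.1 + mu • ij.2).1 = lam * ij.1.1 + mu * ij.2.1 := rfl
          have h2 : (lam • ij.1 + mu • ij.2).2 = lam * ij.1.2 + mu * ij.2.2 := rfl
          rw [Prod.ext_iff, h1, h2]
          constructor
          · rw [hlame, hmue, hch]
            field_simp
            try ring
          · rw [hlame, hmue]
            field_simp
            try ring
        rw [hpt] at hmem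
        exact hub _ hmem
      · obtain ⟨y, hy, rfl⟩ := Finset.mem_image.mp hr
        exact hOfeas y hy
    set M := CF.max' hCFne with hMdef
    have hMle : M ≤ b := hcand_le _ (CF.max'_mem hCFne)
    have hchle : ∀ ij ∈ Lf ×ˢ Hf, ch ij.1 ij.2 ≤ M := by
      intro ij hij
      rw [hMdef]
      apply Finset.le_max'
      rw [hCF, Finset.mem_union]
      exact Or.inl (Finset.mem_image_of_mem _ hij)
    have hOle : ∀ y ∈ Of, y.1 ≤ M := by
      intro y hy
      rw [hMdef]
      apply Finset.le_max'
      rw [hCF, Finset.mem_union]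
      exact Or.inr (Finset.mem_image_of_mem _ hy)
    have hWnn : ∀ ij ∈ Lf ×ˢ Hf, 0 ≤ w ij.1 * w ij.2 * (ij.2.2 - ij.1.2) := by
      intro ij hij
      obtain ⟨hi, hj⟩ := Finset.mem_product.mp hij
      have hic : ij.1.2 < (c : ℝ) := (Finset.mem_filter.mp hi).2
      have hjc : (c : ℝ) < ij.2.2 := (Finset.mem_filter.mp hj).2
      exact mul_nonneg (mul_nonneg (hwT _ hi) (hwTH _ hj)) (by linarith)
    have key1 : ∑ ij ∈ Lf ×ˢ Hf, (w ij.1 * w ij.2 * (ij.2.2 - ij.1.2)) * ch ij.1 ij.2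
        = ((∑ i ∈ Lf, w i * i.1) + (∑ j ∈ Hf, w j * j.1)) * m := by
      have hpt : ∀ ij ∈ Lf ×ˢ Hf, (w ij.1 * w ij.2 * (ij.2.2 - ij.1.2)) * ch ij.1 ij.2
          = (w ij.1 * ij.1.1) * (w ij.2 * (ij.2.2 - (c : ℝ)))
            + (w ij.2 * ij.2.1) * (w ij.1 * ((c : ℝ) - ij.1.2)) := by
        intro ij hij
        obtain ⟨hi, hj⟩ := Finset.mem_product.mp hij
        have hic : ij.1.2 < (c : ℝ) := (Finset.mem_filter.mp hi).2
        have hjc : (c : ℝ) < ij.2.2 := (Finset.mem_filter.mp hj).2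
        have hd : ij.2.2 - ij.1.2 ≠ 0 := by intro h0; linarith [h0]
        rw [hch]
        field_simp
      rw [Finset.sum_congr rfl hpt]
      rw [Finset.sum_product]
      have h1 : ∀ i ∈ Lf, ∑ j ∈ Hf,
          ((w i * i.1) * (w j * (j.2 - (c : ℝ))) + (w j * j.1) * (w i * ((c : ℝ) - i.2)))
          = (w i * i.1) * m + (∑ j ∈ Hf, w j * j.1) * (w i * ((c : ℝ) - i.2)) := by
        intro i _
        rw [Finset.sum_add_distrib, ← Finset.mul_sum, ← Finset.sum_mul, ← hm_def]
      rw [Finset.sum_congr rfl h1, Finset.sum_add_distrib, ← Finset.sum_mul, ← Finset.mul_sum, hm']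
      ring
    have key2 : ∑ ij ∈ Lf ×ˢ Hf, (w ij.1 * w ij.2 * (ij.2.2 - ij.1.2))
        = ((∑ i ∈ Lf, w i) + (∑ j ∈ Hf, w j)) * m := by
      have hpt : ∀ ij ∈ Lf ×ˢ Hf, (w ij.1 * w ij.2 * (ij.2.2 - ij.1.2))
          = (w ij.1) * (w ij.2 * (ij.2.2 - (c : ℝ)))
            + (w ij.2) * (w ij.1 * ((c : ℝ) - ij.1.2)) := by
        intro ij _
        ring
      rw [Finset.sum_congr rfl hpt]
      rw [Finset.sum_product]
      have h1 : ∀ i ∈ Lf, ∑ j ∈ Hf,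
          ((w i) * (w j * (j.2 - (c : ℝ))) + (w j) * (w i * ((c : ℝ) - i.2)))
          = (w i) * m + (∑ j ∈ Hf, w j) * (w i * ((c : ℝ) - i.2)) := by
        intro i _
        rw [Finset.sum_add_distrib, ← Finset.mul_sum, ← Finset.sum_mul, ← hm_def]
      rw [Finset.sum_congr rfl h1, Finset.sum_add_distrib, ← Finset.sum_mul, ← Finset.mul_sum, hm']
      ring
    have hbmle : b * m ≤ M * m := by
      have hb_split : b = (∑ y ∈ Lf, w y * y.1) + (∑ y ∈ Of, w y * y.1) + (∑ y ∈ Hf, w y * y.1) := by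
        rw [← hx1]; exact hsplit _
      have hw_split : (1 : ℝ) = (∑ y ∈ Lf, w y) + (∑ y ∈ Of, w y) + (∑ y ∈ Hf, w y) := by
        rw [← hw1]; exact hsplit _
      have h2 : ((∑ i ∈ Lf, w i * i.1) + (∑ j ∈ Hf, w j * j.1)) * m
          ≤ ((∑ i ∈ Lf, w i) + (∑ j ∈ Hf, w j)) * m * M := by
        rw [← key1]
        calc ∑ ij ∈ Lf ×ˢ Hf, (w ij.1 * w ij.2 * (ij.2.2 - ij.1.2)) * ch ij.1 ij.2
            ≤ ∑ ij ∈ Lf ×ˢ Hf, (w ij.1 * w ij.2 * (ij.2.2 - ij.1.2)) * M :=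
              Finset.sum_le_sum (fun ij hij =>
                mul_le_mul_of_nonneg_left (hchle ij hij) (hWnn ij hij))
          _ = ((∑ i ∈ Lf, w i) + (∑ j ∈ Hf, w j)) * m * M := by rw [← Finset.sum_mul, key2]
      have h3 : (∑ y ∈ Of, w y * y.1) * m ≤ (∑ y ∈ Of, w y) * M * m := by
        apply mul_le_mul_of_nonneg_right _ hmpos.le
        calc ∑ y ∈ Of, w y * y.1 ≤ ∑ y ∈ Of, w y * M :=
              Finset.sum_le_sum fun y hy =>
                mul_le_mul_of_nonneg_left (hOle y hy) (hwTO y hy)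
          _ = (∑ y ∈ Of, w y) * M := by rw [← Finset.sum_mul]
      calc b * m
          = ((∑ i ∈ Lf, w i * i.1) + (∑ j ∈ Hf, w j * j.1)) * m
            + (∑ y ∈ Of, w y * y.1) * m := by rw [hb_split]; ring
        _ ≤ ((∑ i ∈ Lf, w i) + (∑ j ∈ Hf, w j)) * m * M + (∑ y ∈ Of, w y) * M * m :=
            add_le_add h2 h3
        _ = ((∑ y ∈ Lf, w y) + (∑ y ∈ Of, w y) + (∑ y ∈ Hf, w y)) * m * M := by ring
        _ = M * m := by rw [← hw_split]; ring
    have hbM : b ≤ M := le_of_mul_le_mul_right hbmle hmpos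
    have hbeq : b = M := le_antisymm hbM hMle
    have hMCF : M ∈ CF := CF.max'_mem hCFne
    rw [hCF, Finset.mem_union] at hMCF
    rcases hMCF with hr | hr
    · obtain ⟨ij, hij, hije⟩ := Finset.mem_image.mp hr
      obtain ⟨hi, hj⟩ := Finset.mem_product.mp hij
      obtain ⟨⟨mi, hmi⟩, ⟨ki, hki⟩⟩ := hT ij.1 (Finset.mem_filter.mp hi).1
      obtain ⟨⟨mj, hmj⟩, ⟨kj, hkj⟩⟩ := hT ij.2 (Finset.mem_filter.mp hj).1
      have hic : (ki : ℝ) < (c : ℝ) := by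
        rw [← hki]; exact (Finset.mem_filter.mp hi).2
      have hjc : (c : ℝ) < (kj : ℝ) := by
        rw [← hkj]; exact (Finset.mem_filter.mp hj).2
      have hkic : ki < c := by exact_mod_cast hic
      have hkjc : c < kj := by exact_mod_cast hjc
      refine ⟨(((kj : ℚ) - (c:ℚ)) * (mi:ℚ) + ((c : ℚ) - (ki:ℚ)) * (mj:ℚ)) / ((kj : ℚ) - (ki:ℚ)), ?_⟩
      rw [hbeq, ← hije, hch]
      simp only []
      rw [hmi, hki, hmj, hkj]
      push_cast
      ring
    · obtain ⟨y, hy, hye⟩ := Finset.mem_image.mp hr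
      obtain ⟨⟨mi, hmi⟩, _⟩ := hT y (Finset.mem_filter.mp hy).1
      exact ⟨(mi : ℚ), by rw [hbeq, ← hye, hmi]; push_cast; ring⟩

lemma exists_rat_of_isLeast_row (T : Finset (ℝ × ℝ))
    (hT : ∀ p ∈ T, (∃ m : ℤ, p.1 = (m : ℝ)) ∧ (∃ m : ℤ, p.2 = (m : ℝ)))
    (c : ℤ) (a : ℝ)
    (ha : IsLeast {r : ℝ | (r, (c : ℝ)) ∈ convexHull ℝ (↑T : Set (ℝ × ℝ))} a) :
    ∃ q : ℚ, a = (q : ℝ) := by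
  classical
  set fl : ℝ × ℝ →ₗ[ℝ] ℝ × ℝ := (-(LinearMap.fst ℝ ℝ ℝ)).prod (LinearMap.snd ℝ ℝ ℝ) with hfl
  have hfl_apply : ∀ p : ℝ × ℝ, fl p = (-p.1, p.2) := fun p => rfl
  set T' : Finset (ℝ × ℝ) := T.image (fun p => (-p.1, p.2)) with hT'
  have hint : ∀ p ∈ T', (∃ m : ℤ, p.1 = (m : ℝ)) ∧ (∃ m : ℤ, p.2 = (m : ℝ)) := by
    intro p hp
    obtain ⟨y, hy, rfl⟩ := Finset.mem_image.mp hp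
    obtain ⟨⟨mi, hmi⟩, ⟨ki, hki⟩⟩ := hT y hy
    exact ⟨⟨-mi, by simp [hmi]⟩, ⟨ki, hki⟩⟩
  have him : (↑T' : Set (ℝ × ℝ)) = ⇑fl '' (↑T : Set (ℝ × ℝ)) := by
    rw [hT', Finset.coe_image]
    exact Set.image_congr fun p _ => (hfl_apply p).symm
  have hhull : convexHull ℝ (↑T' : Set (ℝ × ℝ)) = ⇑fl '' convexHull ℝ (↑T : Set (ℝ × ℝ)) := by
    rw [him, ← LinearMap.coe_toAffineMap fl, AffineMap.image_convexHull]
  have hmemiff : ∀ r : ℝ, (r, (c : ℝ)) ∈ convexHull ℝ (↑T' : Set (ℝ × ℝ))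
      ↔ (-r, (c : ℝ)) ∈ convexHull ℝ (↑T : Set (ℝ × ℝ)) := by
    intro r
    rw [hhull]
    constructor
    · rintro ⟨p, hp, hpe⟩
      rw [hfl_apply] at hpe
      have h1 : -p.1 = r := congrArg Prod.fst hpe
      have h2 : p.2 = (c : ℝ) := congrArg Prod.snd hpe
      have hpeq : p = (-r, (c : ℝ)) := by
        rw [Prod.ext_iff]
        constructor
        · simp only []; linarith
        · exact h2
      rwa [← hpeq]
    · intro h
      refine ⟨(-r, (c : ℝ)), h, ?_⟩
      rw [hfl_apply]
      norm_num
  have hg : IsGreatest {r : ℝ | (r, (c : ℝ)) ∈ convexHull ℝ (↑T' : Set (ℝ × ℝ))} (-a) := by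
    constructor
    · rw [Set.mem_setOf_eq, hmemiff]
      simpa using ha.1
    · intro r hr
      rw [Set.mem_setOf_eq, hmemiff] at hr
      have := ha.2 hr
      linarith
  obtain ⟨q, hq⟩ := exists_rat_of_isGreatest_row T' hint c (-a) hg
  exact ⟨-q, by push_cast; linarith [hq]⟩



lemma polygon_data (T : Finset (ℝ × ℝ)) (hTne : T.Nonempty)
    (hT : ∀ p ∈ T, (∃ m : ℤ, p.1 = (m : ℝ)) ∧ (∃ m : ℤ, p.2 = (m : ℝ))) :
    ∃ (occ : Finset ℤ) (a b : ℤ → ℝ) (qa qb : ℤ → ℚ),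
      (∀ p ∈ convexHull ℝ (↑T : Set (ℝ × ℝ)), ∀ k : ℤ, p.2 = (k : ℝ) → k ∈ occ) ∧
      (∀ c ∈ occ, {r : ℝ | (r, (c : ℝ)) ∈ convexHull ℝ (↑T : Set (ℝ × ℝ))}
        = Set.Icc (a c) (b c)) ∧
      (∀ c ∈ occ, a c ≤ b c) ∧
      (∀ c ∈ occ, a c = ((qa c : ℚ) : ℝ) ∧ b c = ((qb c : ℚ) : ℝ)) := by
  classical
  set W := convexHull ℝ (↑T : Set (ℝ × ℝ)) with hW
  have hWconv : Convex ℝ W := convex_convexHull ℝ _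
  have hWcp : IsCompact W := T.finite_toSet.isCompact_convexHull ℝ
  set TZ : Finset ℤ := T.image (fun p => ⌊p.2⌋) with hTZ
  have hTZne : TZ.Nonempty := hTne.image _
  set cmin := TZ.min' hTZne with hcmin
  set cmax := TZ.max' hTZne with hcmax
  have hsecond : ∀ p ∈ W, ((cmin : ℝ)) ≤ p.2 ∧ p.2 ≤ (cmax : ℝ) := by
    have hconv : Convex ℝ {p : ℝ × ℝ | ((cmin : ℝ)) ≤ p.2 ∧ p.2 ≤ (cmax : ℝ)} := by
      intro p hp q hq s u hs hu hsu
      have h2 : (s • p + u • q).2 = s * p.2 + u * q.2 := rfl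
      rw [Set.mem_setOf_eq, h2]
      have e1 := mul_le_mul_of_nonneg_left hp.1 hs
      have e2 := mul_le_mul_of_nonneg_left hq.1 hu
      have e3 := mul_le_mul_of_nonneg_left hp.2 hs
      have e4 := mul_le_mul_of_nonneg_left hq.2 hu
      have e5 : s * (cmin:ℝ) + u * (cmin:ℝ) = (cmin:ℝ) := by rw [← add_mul, hsu, one_mul]
      have e6 : s * (cmax:ℝ) + u * (cmax:ℝ) = (cmax:ℝ) := by rw [← add_mul, hsu, one_mul]
      constructor
      · linarith [e1, e2]
      · linarith [e3, e4]
    have hsub : (↑T : Set (ℝ × ℝ)) ⊆ {p : ℝ × ℝ | ((cmin : ℝ)) ≤ p.2 ∧ p.2 ≤ (cmax : ℝ)} := by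
      intro y hy
      obtain ⟨_, ⟨k, hk⟩⟩ := hT y hy
      have hfk : ⌊y.2⌋ = k := by rw [hk]; exact Int.floor_intCast k
      have hmem : ⌊y.2⌋ ∈ TZ := by
        rw [hTZ]; exact Finset.mem_image_of_mem _ hy
      have h1 : cmin ≤ ⌊y.2⌋ := Finset.min'_le _ _ hmem
      have h2 : ⌊y.2⌋ ≤ cmax := Finset.le_max' _ _ hmem
      rw [hfk] at h1 h2
      constructor
      · rw [hk]; exact_mod_cast h1
      · rw [hk]; exact_mod_cast h2
    intro p hp
    exact (convexHull_min hsub hconv) hp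
  set occ : Finset ℤ := (Finset.Icc cmin cmax).filter
    (fun c => {r : ℝ | (r, (c : ℝ)) ∈ W}.Nonempty) with hocc
  have hchoose : ∀ c : ℤ, c ∈ occ → ∃ s : (ℝ × ℝ) × (ℚ × ℚ),
      IsLeast {r : ℝ | (r, (c : ℝ)) ∈ W} s.1.1 ∧
      IsGreatest {r : ℝ | (r, (c : ℝ)) ∈ W} s.1.2 ∧
      {r : ℝ | (r, (c : ℝ)) ∈ W} = Set.Icc s.1.1 s.1.2 ∧
      s.1.1 = ((s.2.1 : ℚ) : ℝ) ∧ s.1.2 = ((s.2.2 : ℚ) : ℝ) := by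
    intro c hc
    have hne : {r : ℝ | (r, (c : ℝ)) ∈ W}.Nonempty := (Finset.mem_filter.mp hc).2
    obtain ⟨a, b, ha, hb, hIcc⟩ := row_eq_Icc W hWconv hWcp _ hne
    obtain ⟨qa, hqa⟩ := exists_rat_of_isLeast_row T hT c a ha
    obtain ⟨qb, hqb⟩ := exists_rat_of_isGreatest_row T hT c b hb
    exact ⟨((a, b), (qa, qb)), ha, hb, hIcc, hqa, hqb⟩
  set F : ℤ → (ℝ × ℝ) × (ℚ × ℚ) := fun c =>
    if h : c ∈ occ then (hchoose c h).choose else default with hF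
  have hFspec : ∀ c : ℤ, ∀ h : c ∈ occ,
      IsLeast {r : ℝ | (r, (c : ℝ)) ∈ W} (F c).1.1 ∧
      IsGreatest {r : ℝ | (r, (c : ℝ)) ∈ W} (F c).1.2 ∧
      {r : ℝ | (r, (c : ℝ)) ∈ W} = Set.Icc (F c).1.1 (F c).1.2 ∧
      (F c).1.1 = (((F c).2.1 : ℚ) : ℝ) ∧ (F c).1.2 = (((F c).2.2 : ℚ) : ℝ) := by
    intro c h
    rw [hF]
    simp only [dif_pos h]
    exact (hchoose c h).choose_spec
  refine ⟨occ, fun c => (F c).1.1, fun c => (F c).1.2,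
    fun c => (F c).2.1, fun c => (F c).2.2, ?_, ?_, ?_, ?_⟩
  · intro p hp k hk
    rw [hocc, Finset.mem_filter]
    constructor
    · rw [Finset.mem_Icc]
      have h := hsecond p hp
      rw [hk] at h
      exact ⟨by exact_mod_cast h.1, by exact_mod_cast h.2⟩
    · exact ⟨p.1, by rw [← hk]; exact hp⟩
  · intro c hc
    exact (hFspec c hc).2.2.1
  · intro c hc
    obtain ⟨ha, hb, hIcc, _, _⟩ := hFspec c hc
    exact hb.2 ha.1
  · intro c hc
    exact ⟨(hFspec c hc).2.2.2.1, (hFspec c hc).2.2.2.2⟩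



/-- Counting points of `W + [0,g]×{0}` at scale `N`. -/
lemma count_add_seg (W : Set (ℝ × ℝ)) (occ : Finset ℤ) (a b : ℤ → ℝ)
    (hA1 : ∀ p ∈ W, ∀ k : ℤ, p.2 = (k : ℝ) → k ∈ occ)
    (hA2 : ∀ c ∈ occ, {r : ℝ | (r, (c : ℝ)) ∈ W} = Set.Icc (a c) (b c))
    (hab : ∀ c ∈ occ, a c ≤ b c)
    (g N : ℕ) (hg : 0 < g) (hN : 0 < N) :
    Set.ncard {p : ℝ × ℝ | p ∈ W + segment ℝ (0 : ℝ × ℝ) ((g : ℝ), 0)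
        ∧ (∃ m : ℤ, (N : ℝ) * p.1 = (m : ℝ)) ∧ (∃ k : ℤ, p.2 = (k : ℝ))}
      = Set.ncard {p : ℝ × ℝ | p ∈ W
        ∧ (∃ m : ℤ, (N : ℝ) * p.1 = (m : ℝ)) ∧ (∃ k : ℤ, p.2 = (k : ℝ))} + occ.card * (N * g) := by
  have hgR : (0 : ℝ) < (g : ℝ) := by exact_mod_cast hg
  have hA1' : ∀ p ∈ W + segment ℝ (0 : ℝ × ℝ) ((g : ℝ), 0), ∀ k : ℤ, p.2 = (k : ℝ) → k ∈ occ := by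
    intro p hp k hk
    obtain ⟨w, hw, z, hz, hsum⟩ := Set.mem_add.mp hp
    rw [mem_segment_horiz hgR] at hz
    have h2 : w.2 + z.2 = p.2 := congrArg Prod.snd hsum
    rw [hz.1, add_zero] at h2
    exact hA1 w hw k (by rw [h2, hk])
  have hA2' : ∀ c ∈ occ, {r : ℝ | (r, (c : ℝ)) ∈ W + segment ℝ (0 : ℝ × ℝ) ((g : ℝ), 0)}
      = Set.Icc (a c) (b c + (g : ℝ)) := by
    intro c hc
    rw [row_add_seg W hgR, hA2 c hc, Set.Icc_add_Icc (hab c hc) hgR.le, add_zero]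
  rw [assembly _ occ a (fun c => b c + (g : ℝ)) N hN hA1' hA2',
    assembly _ occ a b N hN hA1 hA2]
  have hrow : ∀ c ∈ occ, (Finset.Icc ⌈(N : ℝ) * a c⌉ ⌊(N : ℝ) * (b c + (g : ℝ))⌋).card
      = (Finset.Icc ⌈(N : ℝ) * a c⌉ ⌊(N : ℝ) * b c⌋).card + N * g := by
    intro c hc
    have hfl : ⌊(N : ℝ) * (b c + (g : ℝ))⌋ = ⌊(N : ℝ) * b c⌋ + (N * g : ℕ) := by
      have he : (N : ℝ) * (b c + (g : ℝ)) = (N : ℝ) * b c + ((N * g : ℕ) : ℝ) := by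
        push_cast; ring
      rw [he, Int.floor_add_natCast]
    rw [hfl]
    apply card_Icc_add_nat
    have h1 : (N : ℝ) * a c ≤ (N : ℝ) * b c :=
      mul_le_mul_of_nonneg_left (hab c hc) (by positivity)
    calc ⌈(N : ℝ) * a c⌉ ≤ ⌈(N : ℝ) * b c⌉ := Int.ceil_le_ceil h1
      _ ≤ ⌊(N : ℝ) * b c⌋ + 1 := Int.ceil_le_floor_add_one _
  rw [Finset.sum_congr rfl hrow, Finset.sum_add_distrib, Finset.sum_const, smul_eq_mul]

/-- Exact evaluation of the count at scales killing all denominators. -/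
lemma count_exact (occ : Finset ℤ) (a b : ℤ → ℝ) (qa qb : ℤ → ℚ)
    (hq : ∀ c ∈ occ, a c = ((qa c : ℚ) : ℝ) ∧ b c = ((qb c : ℚ) : ℝ))
    (hab : ∀ c ∈ occ, a c ≤ b c)
    (N : ℕ) (hN : 0 < N)
    (hden : ∀ c ∈ occ, ((qa c).den ∣ N) ∧ ((qb c).den ∣ N)) :
    ((∑ c ∈ occ, (Finset.Icc ⌈(N : ℝ) * a c⌉ ⌊(N : ℝ) * b c⌋).card : ℕ) : ℚ)
      = (N : ℚ) * (∑ c ∈ occ, (qb c - qa c)) + occ.card := by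
  have hint : ∀ (q : ℚ), q.den ∣ N → ∃ z : ℤ, (N : ℚ) * q = (z : ℚ) := by
    intro q hqd
    obtain ⟨e, he⟩ := hqd
    have hden0 : ((q.den : ℚ)) ≠ 0 := by
      exact_mod_cast q.den_nz
    have key : ((q.den : ℚ)) * q = (q.num : ℚ) := by
      rw [mul_comm]
      exact Rat.mul_den_eq_num q
    refine ⟨(e : ℤ) * q.num, ?_⟩
    rw [he]
    push_cast
    calc ((q.den : ℚ) * (e : ℚ)) * q = (e : ℚ) * (((q.den : ℚ)) * q) := by ring
      _ = (e : ℚ) * (q.num : ℚ) := by rw [key]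
  have hrow : ∀ c ∈ occ, (((Finset.Icc ⌈(N : ℝ) * a c⌉ ⌊(N : ℝ) * b c⌋).card : ℕ) : ℚ)
      = (N : ℚ) * (qb c - qa c) + 1 := by
    intro c hc
    obtain ⟨za, hza⟩ := hint (qa c) (hden c hc).1
    obtain ⟨zb, hzb⟩ := hint (qb c) (hden c hc).2
    have hNa : (N : ℝ) * a c = ((za : ℤ) : ℝ) := by
      rw [(hq c hc).1]
      exact_mod_cast hza
    have hNb : (N : ℝ) * b c = ((zb : ℤ) : ℝ) := by
      rw [(hq c hc).2]
      exact_mod_cast hzb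
    rw [hNa, hNb, Int.ceil_intCast, Int.floor_intCast, Int.card_Icc]
    have hle : za ≤ zb := by
      have h1 : ((za : ℝ)) ≤ ((zb : ℝ)) := by
        rw [← hNa, ← hNb]
        exact mul_le_mul_of_nonneg_left (hab c hc) (by positivity)
      exact_mod_cast h1
    have htn : (((zb + 1 - za).toNat : ℕ) : ℚ) = ((zb : ℚ) + 1 - (za : ℚ)) := by
      have h0 : (0:ℤ) ≤ zb + 1 - za := by omega
      rw [← Int.cast_natCast, Int.toNat_of_nonneg h0]
      push_cast
      ring
    rw [htn, show ((za : ℚ)) = (N : ℚ) * qa c from hza.symm,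
      show ((zb : ℚ)) = (N : ℚ) * qb c from hzb.symm]
    ring
  calc ((∑ c ∈ occ, (Finset.Icc ⌈(N : ℝ) * a c⌉ ⌊(N : ℝ) * b c⌋).card : ℕ) : ℚ)
      = ∑ c ∈ occ, (((Finset.Icc ⌈(N : ℝ) * a c⌉ ⌊(N : ℝ) * b c⌋).card : ℕ) : ℚ) := by
        push_cast
        rfl
    _ = ∑ c ∈ occ, ((N : ℚ) * (qb c - qa c) + 1) := Finset.sum_congr rfl hrow
    _ = (N : ℚ) * (∑ c ∈ occ, (qb c - qa c)) + occ.card := by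
        rw [Finset.sum_add_distrib, Finset.sum_const, Finset.mul_sum]
        simp


end S9

/-- If the 2-dimensional lattice polygons `P = P' + [0,t]` and `Q = Q' + [0,t]`
(Minkowski sums with the lattice segment `[0,t]`, `t ∈ ℤ²` nonzero) have the same
universal counting function, then so do `P'` and `Q'`. -/
theorem statement9 (P Q P' Q' : Set (Euc 2)) (t : Euc 2)
    (hP : IsLatticePolytope P) (hQ : IsLatticePolytope Q)
    (hP' : IsLatticePolytope P') (hQ' : IsLatticePolytope Q')
    (hPdim : (interior P).Nonempty) (hQdim : (interior Q).Nonempty)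
    (hP'dim : (interior P').Nonempty) (hQ'dim : (interior Q').Nonempty)
    (ht : IsZ t) (ht0 : t ≠ 0)
    (hPP' : P = P' + segment ℝ 0 t) (hQQ' : Q = Q' + segment ℝ 0 t)
    (hUCF : SameUCF P Q) :
    SameUCF P' Q' := by
  classical
  intro π hπi hπz
  obtain ⟨SP, hSPne, hSPZ, hPeq⟩ := hP'
  obtain ⟨SQ, hSQne, hSQZ, hQeq⟩ := hQ'
  have hsZ : IsZ (π t) := hπz t ht
  obtain ⟨s1, hs1⟩ := hsZ 0
  obtain ⟨s2, hs2⟩ := hsZ 1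
  have hs0 : π t ≠ 0 := by
    intro h
    exact ht0 (hπi (by rw [h, map_zero]))
  have hs12 : s1 ≠ 0 ∨ s2 ≠ 0 := by
    by_contra h
    push_neg at h
    apply hs0
    ext i
    fin_cases i
    · show π t 0 = 0
      rw [hs1, h.1]; norm_num
    · show π t 1 = 0
      rw [hs2, h.2]; norm_num
  set g : ℕ := Int.gcd s1 s2 with hgdef
  have hgpos : 0 < g := Int.gcd_pos_iff.mpr hs12
  set u1 : ℤ := s1 / (g : ℤ) with hu1def
  set u2 : ℤ := s2 / (g : ℤ) with hu2def
  have hs1u : s1 = (g : ℤ) * u1 := (Int.mul_ediv_cancel' (Int.gcd_dvd_left s1 s2)).symm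
  have hs2u : s2 = (g : ℤ) * u2 := (Int.mul_ediv_cancel' (Int.gcd_dvd_right s1 s2)).symm
  have hcop : Int.gcd u1 u2 = 1 := Int.gcd_div_gcd_div_gcd hgpos
  set A : ℤ := Int.gcdA u1 u2 with hA
  set B : ℤ := Int.gcdB u1 u2 with hB
  have hbez : (1 : ℤ) = u1 * A + u2 * B := by
    have h := Int.gcd_eq_gcd_ab u1 u2
    rw [hcop] at h
    exact_mod_cast h
  have hBez : (u1 : ℝ) * (A : ℝ) + (u2 : ℝ) * (B : ℝ) = 1 := by exact_mod_cast hbez.symm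
  set uv : Euc 2 := (WithLp.equiv 2 (Fin 2 → ℝ)).symm ![(u1 : ℝ), (u2 : ℝ)] with huvdef
  set vv : Euc 2 := (WithLp.equiv 2 (Fin 2 → ℝ)).symm ![-(B : ℝ), (A : ℝ)] with hvvdef
  set αL : Euc 2 →ₗ[ℝ] ℝ :=
    (A : ℝ) • (EuclideanSpace.projₗ 0 : Euc 2 →ₗ[ℝ] ℝ) + (B : ℝ) • (EuclideanSpace.projₗ 1 : Euc 2 →ₗ[ℝ] ℝ)
    with hαLdef
  set βL : Euc 2 →ₗ[ℝ] ℝ :=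
    (u1 : ℝ) • (EuclideanSpace.projₗ 1 : Euc 2 →ₗ[ℝ] ℝ) - (u2 : ℝ) • (EuclideanSpace.projₗ 0 : Euc 2 →ₗ[ℝ] ℝ)
    with hβLdef
  have hαap : ∀ x : Euc 2, αL x = (A : ℝ) * x 0 + (B : ℝ) * x 1 := fun x => rfl
  have hβap : ∀ x : Euc 2, βL x = (u1 : ℝ) * x 1 - (u2 : ℝ) * x 0 := fun x => rfl
  have huv0 : uv 0 = (u1 : ℝ) := rfl
  have huv1 : uv 1 = (u2 : ℝ) := rfl
  have hvv0 : vv 0 = -(B : ℝ) := rfl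
  have hvv1 : vv 1 = (A : ℝ) := rfl
  have hrecon : ∀ x : Euc 2, (αL x) • uv + (βL x) • vv = x := by
    intro x
    ext i
    fin_cases i
    · show (αL x) * uv 0 + (βL x) * vv 0 = x 0
      rw [hαap, hβap, huv0, hvv0]
      linear_combination (x 0) * hBez
    · show (αL x) * uv 1 + (βL x) * vv 1 = x 1
      rw [hαap, hβap, huv1, hvv1]
      linear_combination (x 1) * hBez
  have hZαβ : ∀ x : Euc 2, IsZ x → (∃ m : ℤ, αL x = (m : ℝ)) ∧ (∃ k : ℤ, βL x = (k : ℝ)) := by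
    intro x hx
    obtain ⟨m0, h0⟩ := hx 0
    obtain ⟨m1, h1⟩ := hx 1
    constructor
    · exact ⟨A * m0 + B * m1, by rw [hαap, h0, h1]; push_cast; ring⟩
    · exact ⟨u1 * m1 - u2 * m0, by rw [hβap, h0, h1]; push_cast; ring⟩
  have hZcomb : ∀ r q : ℝ, (∃ m : ℤ, r = (m : ℝ)) → (∃ k : ℤ, q = (k : ℝ)) →
      IsZ (r • uv + q • vv) := by
    rintro r q ⟨m, rfl⟩ ⟨k, rfl⟩ i
    fin_cases i
    · exact ⟨m * u1 + k * (-B), by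
        show (m : ℝ) * uv 0 + (k : ℝ) * vv 0 = _
        rw [huv0, hvv0]; push_cast; ring⟩
    · exact ⟨m * u2 + k * A, by
        show (m : ℝ) * uv 1 + (k : ℝ) * vv 1 = _
        rw [huv1, hvv1]; push_cast; ring⟩
  have hαuv : αL uv = 1 := by rw [hαap, huv0, huv1]; linear_combination hBez
  have hαvv : αL vv = 0 := by rw [hαap, hvv0, hvv1]; ring
  have hβuv : βL uv = 0 := by rw [hβap, huv0, huv1]; ring
  have hβvv : βL vv = 1 := by rw [hβap, hvv0, hvv1]; linear_combination hBez
  have hαcomb : ∀ r q : ℝ, αL (r • uv + q • vv) = r := by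
    intro r q
    rw [map_add, LinearMap.map_smul, LinearMap.map_smul, hαuv, hαvv, smul_eq_mul, smul_eq_mul]
    ring
  have hβcomb : ∀ r q : ℝ, βL (r • uv + q • vv) = q := by
    intro r q
    rw [map_add, LinearMap.map_smul, LinearMap.map_smul, hβuv, hβvv, smul_eq_mul, smul_eq_mul]
    ring
  set ΨL : Euc 2 →ₗ[ℝ] ℝ × ℝ := αL.prod βL with hΨLdef
  have hΨap : ∀ x : Euc 2, ΨL x = (αL x, βL x) := fun x => rfl
  have hΨinj : Function.Injective ΨL := by
    intro x y hxy
    have h1 : αL x = αL y := congrArg Prod.fst hxy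
    have h2 : βL x = βL y := congrArg Prod.snd hxy
    rw [← hrecon x, ← hrecon y, h1, h2]
  have hαs : αL (π t) = (g : ℝ) := by
    rw [hαap, hs1, hs2, hs1u, hs2u]
    push_cast
    linear_combination (g : ℝ) * hBez
  have hβs : βL (π t) = 0 := by
    rw [hβap, hs1, hs2, hs1u, hs2u]
    push_cast
    ring
  have hΨs : ΨL (π t) = ((g : ℝ), 0) := by
    rw [hΨap, hαs, hβs]
  -- the stretch maps
  have hstretch : ∀ N : ℕ, 0 < N → ∃ ρ : Euc 2 →ₗ[ℝ] Euc 2,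
      (∀ x, ρ x = ((N : ℝ) * αL x) • uv + (βL x) • vv) ∧ Function.Injective ρ
        ∧ (∀ x, IsZ x → IsZ (ρ x)) := by
    intro N hN
    set ρ : Euc 2 →ₗ[ℝ] Euc 2 := (((N : ℝ) • αL).smulRight uv) + (βL.smulRight vv) with hρdef
    have hap : ∀ x, ρ x = ((N : ℝ) * αL x) • uv + (βL x) • vv := by
      intro x
      show (((N : ℝ) • αL) x) • uv + (βL x) • vv = _
      rw [LinearMap.smul_apply, smul_eq_mul]
    refine ⟨ρ, hap, ?_, ?_⟩
    · intro x y hxy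
      rw [hap, hap] at hxy
      have hNne : (N : ℝ) ≠ 0 := by positivity
      have e1 : (N : ℝ) * αL x = (N : ℝ) * αL y := by
        calc (N : ℝ) * αL x = αL (((N : ℝ) * αL x) • uv + (βL x) • vv) := (hαcomb _ _).symm
          _ = αL (((N : ℝ) * αL y) • uv + (βL y) • vv) := by rw [hxy]
          _ = (N : ℝ) * αL y := hαcomb _ _
      have e2 : βL x = βL y := by
        calc βL x = βL (((N : ℝ) * αL x) • uv + (βL x) • vv) := (hβcomb _ _).symm
          _ = βL (((N : ℝ) * αL y) • uv + (βL y) • vv) := by rw [hxy]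
          _ = βL y := hβcomb _ _
      have e1' : αL x = αL y := mul_left_cancel₀ hNne e1
      rw [← hrecon x, ← hrecon y, e1', e2]
    · intro x hx
      obtain ⟨⟨m, hm⟩, ⟨k, hk⟩⟩ := hZαβ x hx
      rw [hap x]
      exact hZcomb _ _ ⟨N * m, by rw [hm]; push_cast; ring⟩ ⟨k, hk⟩
  -- counting chain for a stretch map
  have hcount : ∀ (N : ℕ), 0 < N → ∀ (ρ : Euc 2 →ₗ[ℝ] Euc 2),
      (∀ x, ρ x = ((N : ℝ) * αL x) • uv + (βL x) • vv) → Function.Injective ρ →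
      ∀ Y : Set (Euc 2),
      Set.ncard {x | x ∈ ⇑ρ '' Y ∧ IsZ x}
        = Set.ncard {p : ℝ × ℝ | p ∈ ⇑ΨL '' Y
            ∧ (∃ m : ℤ, (N : ℝ) * p.1 = (m : ℝ)) ∧ (∃ k : ℤ, p.2 = (k : ℝ))} := by
    intro N hN ρ hap hρinj Y
    have h1 : {x | x ∈ ⇑ρ '' Y ∧ IsZ x} = ⇑ρ '' {y | y ∈ Y ∧ IsZ (ρ y)} := by
      ext x
      constructor
      · rintro ⟨⟨y, hy, rfl⟩, hZ⟩
        exact ⟨y, ⟨hy, hZ⟩, rfl⟩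
      · rintro ⟨y, ⟨hy, hZ⟩, rfl⟩
        exact ⟨⟨y, hy, rfl⟩, hZ⟩
    have h2 : {y | y ∈ Y ∧ IsZ (ρ y)}
        = {y | y ∈ Y ∧ ((∃ m : ℤ, (N : ℝ) * αL y = (m : ℝ)) ∧ (∃ k : ℤ, βL y = (k : ℝ)))} := by
      ext y
      simp only [Set.mem_setOf_eq]
      apply and_congr_right
      intro _
      constructor
      · intro hZ
        obtain ⟨⟨m, hm⟩, ⟨k, hk⟩⟩ := hZαβ _ hZ
        rw [hap y, hαcomb] at hm
        rw [hap y, hβcomb] at hk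
        exact ⟨⟨m, hm⟩, ⟨k, hk⟩⟩
      · rintro ⟨⟨m, hm⟩, ⟨k, hk⟩⟩
        rw [hap y]
        exact hZcomb _ _ ⟨m, hm⟩ ⟨k, hk⟩
    have h3 : ⇑ΨL '' {y | y ∈ Y ∧ ((∃ m : ℤ, (N : ℝ) * αL y = (m : ℝ)) ∧ (∃ k : ℤ, βL y = (k : ℝ)))}
        = {p : ℝ × ℝ | p ∈ ⇑ΨL '' Y
            ∧ (∃ m : ℤ, (N : ℝ) * p.1 = (m : ℝ)) ∧ (∃ k : ℤ, p.2 = (k : ℝ))} := by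
      ext p
      constructor
      · rintro ⟨y, ⟨hy, hc⟩, rfl⟩
        exact ⟨Set.mem_image_of_mem _ hy, hc⟩
      · rintro ⟨⟨y, hy, rfl⟩, hc⟩
        exact ⟨y, ⟨hy, hc⟩, rfl⟩
    rw [h1, Set.ncard_image_of_injective _ hρinj, h2, ← h3,
      Set.ncard_image_of_injective _ hΨinj]
  -- counting chain at scale 1 without a stretch map
  have hcount1 : ∀ Y : Set (Euc 2),
      Set.ncard {x | x ∈ Y ∧ IsZ x}
        = Set.ncard {p : ℝ × ℝ | p ∈ ⇑ΨL '' Y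
            ∧ (∃ m : ℤ, ((1 : ℕ) : ℝ) * p.1 = (m : ℝ)) ∧ (∃ k : ℤ, p.2 = (k : ℝ))} := by
    intro Y
    have h2 : {y | y ∈ Y ∧ IsZ y}
        = {y | y ∈ Y ∧ ((∃ m : ℤ, ((1 : ℕ) : ℝ) * αL y = (m : ℝ)) ∧ (∃ k : ℤ, βL y = (k : ℝ)))} := by
      ext y
      simp only [Set.mem_setOf_eq, Nat.cast_one, one_mul]
      apply and_congr_right
      intro _
      constructor
      · exact fun hZ => hZαβ y hZ
      · rintro ⟨⟨m, hm⟩, ⟨k, hk⟩⟩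
        rw [← hrecon y]
        exact hZcomb _ _ ⟨m, hm⟩ ⟨k, hk⟩
    have h3 : ⇑ΨL '' {y | y ∈ Y ∧ ((∃ m : ℤ, ((1 : ℕ) : ℝ) * αL y = (m : ℝ)) ∧ (∃ k : ℤ, βL y = (k : ℝ)))}
        = {p : ℝ × ℝ | p ∈ ⇑ΨL '' Y
            ∧ (∃ m : ℤ, ((1 : ℕ) : ℝ) * p.1 = (m : ℝ)) ∧ (∃ k : ℤ, p.2 = (k : ℝ))} := by
      ext p
      constructor
      · rintro ⟨y, ⟨hy, hc⟩, rfl⟩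
        exact ⟨Set.mem_image_of_mem _ hy, hc⟩
      · rintro ⟨⟨y, hy, rfl⟩, hc⟩
        exact ⟨y, ⟨hy, hc⟩, rfl⟩
    rw [h2, ← h3, Set.ncard_image_of_injective _ hΨinj]
  -- polygon data in ℝ × ℝ
  set TP : Finset (ℝ × ℝ) := SP.image (fun x => ΨL (π x)) with hTPdef
  set TQ : Finset (ℝ × ℝ) := SQ.image (fun x => ΨL (π x)) with hTQdef
  have hTPne : TP.Nonempty := hSPne.image _
  have hTQne : TQ.Nonempty := hSQne.image _
  have hTPZ : ∀ p ∈ TP, (∃ m : ℤ, p.1 = (m : ℝ)) ∧ (∃ k : ℤ, p.2 = (k : ℝ)) := by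
    intro p hp
    obtain ⟨x, hx, rfl⟩ := Finset.mem_image.mp hp
    exact hZαβ (π x) (hπz x (hSPZ x hx))
  have hTQZ : ∀ p ∈ TQ, (∃ m : ℤ, p.1 = (m : ℝ)) ∧ (∃ k : ℤ, p.2 = (k : ℝ)) := by
    intro p hp
    obtain ⟨x, hx, rfl⟩ := Finset.mem_image.mp hp
    exact hZαβ (π x) (hπz x (hSQZ x hx))
  have hWP : ⇑ΨL '' (⇑π '' P') = convexHull ℝ (↑TP : Set (ℝ × ℝ)) := by
    rw [hPeq]
    have e1 : ⇑π '' (convexHull ℝ (↑SP : Set (Euc 2))) = convexHull ℝ (⇑π '' ↑SP) := by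
      rw [← LinearMap.coe_toAffineMap π]
      exact π.toAffineMap.image_convexHull _
    have e2 : ⇑ΨL '' (convexHull ℝ (⇑π '' (↑SP : Set (Euc 2)))) = convexHull ℝ (⇑ΨL '' (⇑π '' ↑SP)) := by
      rw [← LinearMap.coe_toAffineMap ΨL]
      exact ΨL.toAffineMap.image_convexHull _
    rw [e1, e2]
    congr 1
    rw [hTPdef, Finset.coe_image, ← Set.image_comp]
    rfl
  have hWQ : ⇑ΨL '' (⇑π '' Q') = convexHull ℝ (↑TQ : Set (ℝ × ℝ)) := by
    rw [hQeq]
    have e1 : ⇑π '' (convexHull ℝ (↑SQ : Set (Euc 2))) = convexHull ℝ (⇑π '' ↑SQ) := by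
      rw [← LinearMap.coe_toAffineMap π]
      exact π.toAffineMap.image_convexHull _
    have e2 : ⇑ΨL '' (convexHull ℝ (⇑π '' (↑SQ : Set (Euc 2)))) = convexHull ℝ (⇑ΨL '' (⇑π '' ↑SQ)) := by
      rw [← LinearMap.coe_toAffineMap ΨL]
      exact ΨL.toAffineMap.image_convexHull _
    rw [e1, e2]
    congr 1
    rw [hTQdef, Finset.coe_image, ← Set.image_comp]
    rfl
  have hsegim : ⇑ΨL '' (⇑π '' segment ℝ 0 t) = segment ℝ (0 : ℝ × ℝ) (((g : ℕ) : ℝ), 0) := by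
    have e1 : ⇑π '' segment ℝ 0 t = segment ℝ (π 0) (π t) := by
      rw [← LinearMap.coe_toAffineMap π]
      exact image_segment ℝ π.toAffineMap 0 t
    have e2 : ⇑ΨL '' segment ℝ (π 0) (π t) = segment ℝ (ΨL (π 0)) (ΨL (π t)) := by
      rw [← LinearMap.coe_toAffineMap ΨL]
      exact image_segment ℝ ΨL.toAffineMap _ _
    rw [e1, e2, map_zero, map_zero, hΨs]
  have hWPseg : ⇑ΨL '' (⇑π '' P)
      = convexHull ℝ (↑TP : Set (ℝ × ℝ)) + segment ℝ (0 : ℝ × ℝ) (((g : ℕ) : ℝ), 0) := by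
    rw [hPP']
    rw [image_add π, image_add ΨL, hWP, hsegim]
  have hWQseg : ⇑ΨL '' (⇑π '' Q)
      = convexHull ℝ (↑TQ : Set (ℝ × ℝ)) + segment ℝ (0 : ℝ × ℝ) (((g : ℕ) : ℝ), 0) := by
    rw [hQQ']
    rw [image_add π, image_add ΨL, hWQ, hsegim]
  obtain ⟨occP, aP, bP, qaP, qbP, hA1P, hA2P, habP, hqP⟩ := S9.polygon_data TP hTPne hTPZ
  obtain ⟨occQ, aQ, bQ, qaQ, qbQ, hA1Q, hA2Q, habQ, hqQ⟩ := S9.polygon_data TQ hTQne hTQZ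
  -- the master equation
  have main : ∀ N : ℕ, 0 < N →
      (∑ c ∈ occP, (Finset.Icc ⌈(N : ℝ) * aP c⌉ ⌊(N : ℝ) * bP c⌋).card) + occP.card * (N * g)
        = (∑ c ∈ occQ, (Finset.Icc ⌈(N : ℝ) * aQ c⌉ ⌊(N : ℝ) * bQ c⌋).card)
          + occQ.card * (N * g) := by
    intro N hN
    obtain ⟨ρ, hap, hρinj, hρZ⟩ := hstretch N hN
    have huse := hUCF (ρ.comp π) (hρinj.comp hπi) (fun x hx => hρZ _ (hπz x hx))
    rw [LinearMap.coe_comp, Set.image_comp, Set.image_comp] at huse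
    rw [hcount N hN ρ hap hρinj (⇑π '' P), hcount N hN ρ hap hρinj (⇑π '' Q)] at huse
    rw [hWPseg, hWQseg] at huse
    rw [S9.count_add_seg _ occP aP bP hA1P hA2P habP g N hgpos hN,
        S9.count_add_seg _ occQ aQ bQ hA1Q hA2Q habQ g N hgpos hN] at huse
    rw [S9.assembly _ occP aP bP N hN hA1P hA2P,
        S9.assembly _ occQ aQ bQ N hN hA1Q hA2Q] at huse
    exact huse
  -- common denominator
  set DP : ℕ := ∏ c ∈ occP, (qaP c).den * (qbP c).den with hDPdef
  set DQ : ℕ := ∏ c ∈ occQ, (qaQ c).den * (qbQ c).den with hDQdef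
  set D : ℕ := DP * DQ with hDdef
  have hDPpos : 0 < DP := Finset.prod_pos fun c _ => Nat.mul_pos (qaP c).pos (qbP c).pos
  have hDQpos : 0 < DQ := Finset.prod_pos fun c _ => Nat.mul_pos (qaQ c).pos (qbQ c).pos
  have hDpos : 0 < D := Nat.mul_pos hDPpos hDQpos
  have hdvdP : ∀ N : ℕ, D ∣ N → ∀ c ∈ occP, (qaP c).den ∣ N ∧ (qbP c).den ∣ N := by
    intro N hDN c hc
    have h1 : (qaP c).den * (qbP c).den ∣ DP := Finset.dvd_prod_of_mem _ hc
    constructor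
    · exact dvd_trans (dvd_trans (dvd_mul_right _ _) h1)
        (dvd_trans (dvd_mul_right DP DQ) hDN)
    · exact dvd_trans (dvd_trans (dvd_mul_left _ _) h1)
        (dvd_trans (dvd_mul_right DP DQ) hDN)
  have hdvdQ : ∀ N : ℕ, D ∣ N → ∀ c ∈ occQ, (qaQ c).den ∣ N ∧ (qbQ c).den ∣ N := by
    intro N hDN c hc
    have h1 : (qaQ c).den * (qbQ c).den ∣ DQ := Finset.dvd_prod_of_mem _ hc
    constructor
    · exact dvd_trans (dvd_trans (dvd_mul_right _ _) h1)
        (dvd_trans (dvd_mul_left DQ DP) hDN)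
    · exact dvd_trans (dvd_trans (dvd_mul_left _ _) h1)
        (dvd_trans (dvd_mul_left DQ DP) hDN)
  -- exact equations at N = D and N = 2D
  have getEq : ∀ N : ℕ, 0 < N → D ∣ N →
      (N : ℚ) * (∑ c ∈ occP, (qbP c - qaP c)) + occP.card + (occP.card : ℚ) * ((N : ℚ) * (g : ℚ))
        = (N : ℚ) * (∑ c ∈ occQ, (qbQ c - qaQ c)) + occQ.card
          + (occQ.card : ℚ) * ((N : ℚ) * (g : ℚ)) := by
    intro N hN hDN
    have h := main N hN
    have hc := congrArg (fun n : ℕ => (n : ℚ)) h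
    simp only [Nat.cast_add, Nat.cast_mul] at hc
    rw [S9.count_exact occP aP bP qaP qbP hqP habP N hN (hdvdP N hDN),
        S9.count_exact occQ aQ bQ qaQ qbQ hqQ habQ N hN (hdvdQ N hDN)] at hc
    linear_combination hc
  have e1 := getEq D hDpos dvd_rfl
  have e2 := getEq (2 * D) (by positivity) (dvd_mul_left D 2)
  have hHH : ((occP.card : ℕ) : ℚ) = ((occQ.card : ℕ) : ℚ) := by
    push_cast at e1 e2 ⊢
    linear_combination 2 * e1 - e2
  have hHHn : occP.card = occQ.card := by exact_mod_cast hHH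
  have h1 := main 1 Nat.one_pos
  rw [hHHn] at h1
  have hS1 : (∑ c ∈ occP, (Finset.Icc ⌈((1 : ℕ) : ℝ) * aP c⌉ ⌊((1 : ℕ) : ℝ) * bP c⌋).card)
      = (∑ c ∈ occQ, (Finset.Icc ⌈((1 : ℕ) : ℝ) * aQ c⌉ ⌊((1 : ℕ) : ℝ) * bQ c⌋).card) :=
    Nat.add_right_cancel h1
  show Set.ncard {x | x ∈ ⇑π '' P' ∧ IsZ x} = Set.ncard {x | x ∈ ⇑π '' Q' ∧ IsZ x}
  rw [hcount1 (⇑π '' P'), hcount1 (⇑π '' Q'), hWP, hWQ,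
      S9.assembly _ occP aP bP 1 Nat.one_pos hA1P hA2P,
      S9.assembly _ occQ aQ bQ 1 Nat.one_pos hA1Q hA2Q]
  exact hS1
end
end

section
/- Let X be the triangle with vertices (0,0), (2,0), (1,1) and let Y be the triangle with vertices (0,0), (1,1), (0,3) in ℝ². Set P = X + Y and Q = X + (−Y) (Minkowski sums, where −Y = {−y : y ∈ Y}). Then Area(P) = Area(Q), and P and Q have the same universal counting function. -/
open MeasureTheory Set Pointwise

noncomputable section

namespace St11

abbrev E2 := Euc 2

lemma cadd (x y : E2) (i : Fin 2) : (x + y) i = x i + y i := rfl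
lemma csub (x y : E2) (i : Fin 2) : (x - y) i = x i - y i := rfl
lemma cneg (x : E2) (i : Fin 2) : (-x) i = -(x i) := rfl
lemma csmul (c : ℝ) (x : E2) (i : Fin 2) : (c • x) i = c * x i := rfl

lemma combo3 {u v w : E2} {α β γ : ℝ} (hα : 0 ≤ α) (hβ : 0 ≤ β) (hγ : 0 ≤ γ)
    (hs : α + β + γ = 1) : α • u + β • v + γ • w ∈ convexHull ℝ ({u, v, w} : Set E2) := by
  have hu : u ∈ convexHull ℝ ({u, v, w} : Set E2) := subset_convexHull _ _ (by simp)
  have hv : v ∈ convexHull ℝ ({u, v, w} : Set E2) := subset_convexHull _ _ (by simp)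
  have hw : w ∈ convexHull ℝ ({u, v, w} : Set E2) := subset_convexHull _ _ (by simp)
  have hc : Convex ℝ (convexHull ℝ ({u, v, w} : Set E2)) := convex_convexHull _ _
  rcases eq_or_lt_of_le (add_nonneg hβ hγ) with h0 | hpos
  · have hβ0 : β = 0 := by linarith
    have hγ0 : γ = 0 := by linarith
    have hα1 : α = 1 := by linarith
    simpa [hβ0, hγ0, hα1] using hu
  · have hz : (β / (β + γ)) • v + (γ / (β + γ)) • w ∈ convexHull ℝ ({u, v, w} : Set E2) :=
      hc hv hw (div_nonneg hβ hpos.le) (div_nonneg hγ hpos.le) (by field_simp)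
    have hx : α • u + β • v + γ • w
        = α • u + (β + γ) • ((β / (β + γ)) • v + (γ / (β + γ)) • w) := by
      rw [smul_add, smul_smul, smul_smul, mul_div_cancel₀ _ (ne_of_gt hpos),
        mul_div_cancel₀ _ (ne_of_gt hpos), add_assoc]
    rw [hx]
    exact hc hu hz hα (by linarith) (by linarith)

lemma mem_tri {x : E2} (u0 u1 v0 v1 w0 w1 : ℝ) {α β γ : ℝ}
    (hα : 0 ≤ α) (hβ : 0 ≤ β) (hγ : 0 ≤ γ) (hs : α + β + γ = 1)
    (h0 : x 0 = α * u0 + β * v0 + γ * w0) (h1 : x 1 = α * u1 + β * v1 + γ * w1) :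
    x ∈ convexHull ℝ ({!₂[u0, u1], !₂[v0, v1], !₂[w0, w1]} : Set E2) := by
  have hx : x = α • (!₂[u0, u1] : E2) + β • (!₂[v0, v1] : E2) + γ • (!₂[w0, w1] : E2) := by
    ext i
    fin_cases i
    · simpa [cadd, csmul] using h0
    · simpa [cadd, csmul] using h1
  rw [hx]
  exact combo3 hα hβ hγ hs

/-- H-description of `P = X + Y`. -/
def PH : Set E2 :=
  {x | 0 ≤ x 1 ∧ x 0 ≤ x 1 + 2 ∧ 2 * x 0 + x 1 ≤ 7 ∧ x 0 + x 1 ≤ 5 ∧ x 1 ≤ x 0 + 3 ∧ 0 ≤ x 0}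

/-- H-description of `Q = X - Y`. -/
def QH : Set E2 :=
  {x | -3 ≤ 2 * x 0 + x 1 ∧ -3 ≤ x 1 ∧ x 0 ≤ 2 ∧ x 0 + x 1 ≤ 2 ∧ x 1 ≤ x 0}

lemma vecpt (a b : ℝ) : (!₂[a, b] : E2) 0 = a ∧ (!₂[a, b] : E2) 1 = b := ⟨rfl, rfl⟩

lemma vec_eq {a b : ℝ} (x : E2) (h0 : x 0 = a) (h1 : x 1 = b) : x = !₂[a, b] := by
  ext i; fin_cases i
  · exact h0
  · exact h1

lemma convex_PH : Convex ℝ PH := by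
  intro x hx y hy a b ha hb hab
  obtain ⟨h1, h2, h3, h4, h5, h6⟩ := hx
  obtain ⟨g1, g2, g3, g4, g5, g6⟩ := hy
  refine ⟨?_, ?_, ?_, ?_, ?_, ?_⟩ <;>
    simp only [cadd, csmul] <;>
    nlinarith [mul_le_mul_of_nonneg_left h2 ha, mul_le_mul_of_nonneg_left g2 hb,
      mul_le_mul_of_nonneg_left h3 ha, mul_le_mul_of_nonneg_left g3 hb,
      mul_le_mul_of_nonneg_left h4 ha, mul_le_mul_of_nonneg_left g4 hb,
      mul_le_mul_of_nonneg_left h5 ha, mul_le_mul_of_nonneg_left g5 hb,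
      mul_nonneg ha h1, mul_nonneg hb g1, mul_nonneg ha h6, mul_nonneg hb g6]

lemma convex_QH : Convex ℝ QH := by
  intro x hx y hy a b ha hb hab
  obtain ⟨h1, h2, h3, h4, h5⟩ := hx
  obtain ⟨g1, g2, g3, g4, g5⟩ := hy
  refine ⟨?_, ?_, ?_, ?_, ?_⟩ <;>
    simp only [cadd, csmul] <;>
    nlinarith [mul_le_mul_of_nonneg_left h1 ha, mul_le_mul_of_nonneg_left g1 hb,
      mul_le_mul_of_nonneg_left h2 ha, mul_le_mul_of_nonneg_left g2 hb,
      mul_le_mul_of_nonneg_left h3 ha, mul_le_mul_of_nonneg_left g3 hb,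
      mul_le_mul_of_nonneg_left h4 ha, mul_le_mul_of_nonneg_left g4 hb,
      mul_le_mul_of_nonneg_left h5 ha, mul_le_mul_of_nonneg_left g5 hb]

def SX : Set E2 := {!₂[0, 0], !₂[2, 0], !₂[1, 1]}
def SY : Set E2 := {!₂[0, 0], !₂[1, 1], !₂[0, 3]}

lemma mem_sum {A B : Set E2} {u v : E2} (ha : u ∈ A) (hb : v ∈ B) (p : E2)
    (h0 : p 0 = u 0 + v 0) (h1 : p 1 = u 1 + v 1) : p ∈ A + B := by
  have : p = u + v := by ext i; fin_cases i; exacts [h0, h1]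
  rw [this]; exact Set.add_mem_add ha hb

lemma P_eq : convexHull ℝ (SX + SY) = PH := by
  apply Subset.antisymm
  · apply convexHull_min _ convex_PH
    rintro x hx
    rw [Set.mem_add] at hx
    obtain ⟨a, ha, b, hb, rfl⟩ := hx
    simp only [SX, SY, Set.mem_insert_iff, Set.mem_singleton_iff] at ha hb
    rcases ha with rfl | rfl | rfl <;> rcases hb with rfl | rfl | rfl <;>
      refine ⟨?_, ?_, ?_, ?_, ?_, ?_⟩ <;> simp [cadd] <;> norm_num
  · intro x hx
    obtain ⟨h1, h2, h3, h4, h5, h6⟩ := hx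
    have m00 : (!₂[0, 0] : E2) ∈ SX := by simp [SX]
    have m20 : (!₂[2, 0] : E2) ∈ SX := by simp [SX]
    have m11 : (!₂[1, 1] : E2) ∈ SX := by simp [SX]
    have n00 : (!₂[0, 0] : E2) ∈ SY := by simp [SY]
    have n11 : (!₂[1, 1] : E2) ∈ SY := by simp [SY]
    have n03 : (!₂[0, 3] : E2) ∈ SY := by simp [SY]
    rcases le_or_gt (3 * x 1) (x 0) with hc1 | hc1
    · -- triangle (0,0), (2,0), (3,1)
      have sub1 : ({!₂[0, 0], !₂[2, 0], !₂[3, 1]} : Set E2) ⊆ SX + SY := by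
        rintro p (rfl | rfl | rfl)
        · exact mem_sum m00 n00 _ (by norm_num) (by norm_num)
        · exact mem_sum m20 n00 _ (by norm_num) (by norm_num)
        · exact mem_sum m20 n11 _ (by norm_num) (by norm_num)
      refine convexHull_mono sub1 (mem_tri 0 0 2 0 3 1
        (α := 1 - (x 0 - 3 * x 1) / 2 - x 1) (β := (x 0 - 3 * x 1) / 2) (γ := x 1)
        (by linarith) (by linarith) (by linarith) (by ring) (by ring) (by ring))
    · rcases le_or_gt (2 * x 1) (3 * x 0) with hc2 | hc2
      · -- triangle (0,0), (3,1), (2,3)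
        have sub2 : ({!₂[0, 0], !₂[3, 1], !₂[2, 3]} : Set E2) ⊆ SX + SY := by
          rintro p (rfl | rfl | rfl)
          · exact mem_sum m00 n00 _ (by norm_num) (by norm_num)
          · exact mem_sum m20 n11 _ (by norm_num) (by norm_num)
          · exact mem_sum m20 n03 _ (by norm_num) (by norm_num)
        refine convexHull_mono sub2 (mem_tri 0 0 3 1 2 3
          (α := 1 - (3 * x 0 - 2 * x 1) / 7 - (3 * x 1 - x 0) / 7)
          (β := (3 * x 0 - 2 * x 1) / 7) (γ := (3 * x 1 - x 0) / 7)
          (by linarith) (by linarith) (by linarith) (by ring) (by ring) (by ring))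
      · rcases le_or_gt (x 1) (4 * x 0) with hc3 | hc3
        · -- triangle (0,0), (2,3), (1,4)
          have sub3 : ({!₂[0, 0], !₂[2, 3], !₂[1, 4]} : Set E2) ⊆ SX + SY := by
            rintro p (rfl | rfl | rfl)
            · exact mem_sum m00 n00 _ (by norm_num) (by norm_num)
            · exact mem_sum m20 n03 _ (by norm_num) (by norm_num)
            · exact mem_sum m11 n03 _ (by norm_num) (by norm_num)
          refine convexHull_mono sub3 (mem_tri 0 0 2 3 1 4
            (α := 1 - (4 * x 0 - x 1) / 5 - (2 * x 1 - 3 * x 0) / 5)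
            (β := (4 * x 0 - x 1) / 5) (γ := (2 * x 1 - 3 * x 0) / 5)
            (by linarith) (by linarith) (by linarith) (by ring) (by ring) (by ring))
        · -- triangle (0,0), (1,4), (0,3)
          have sub4 : ({!₂[0, 0], !₂[1, 4], !₂[0, 3]} : Set E2) ⊆ SX + SY := by
            rintro p (rfl | rfl | rfl)
            · exact mem_sum m00 n00 _ (by norm_num) (by norm_num)
            · exact mem_sum m11 n03 _ (by norm_num) (by norm_num)
            · exact mem_sum m00 n03 _ (by norm_num) (by norm_num)
          refine convexHull_mono sub4 (mem_tri 0 0 1 4 0 3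
            (α := 1 - x 0 - (x 1 - 4 * x 0) / 3)
            (β := x 0) (γ := (x 1 - 4 * x 0) / 3)
            (by linarith) (by linarith) (by linarith) (by ring) (by ring) (by ring))

lemma Q_eq : convexHull ℝ (SX + -SY) = QH := by
  have negSY : -SY = ({!₂[0, 0], !₂[-1, -1], !₂[0, -3]} : Set E2) := by
    simp only [SY, Set.neg_insert, Set.neg_singleton]
    congr 1
    · ext i; fin_cases i <;> simp [cneg]
    congr 1
    · ext i; fin_cases i <;> simp [cneg]
    congr 1
    ext i; fin_cases i <;> simp [cneg]
  rw [negSY]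
  apply Subset.antisymm
  · apply convexHull_min _ convex_QH
    rintro x hx
    rw [Set.mem_add] at hx
    obtain ⟨a, ha, b, hb, rfl⟩ := hx
    simp only [SX, Set.mem_insert_iff, Set.mem_singleton_iff] at ha hb
    rcases ha with rfl | rfl | rfl <;> rcases hb with rfl | rfl | rfl <;>
      refine ⟨?_, ?_, ?_, ?_, ?_⟩ <;> simp [cadd] <;> norm_num
  · intro x hx
    obtain ⟨h1, h2, h3, h4, h5⟩ := hx
    have m00 : (!₂[0, 0] : E2) ∈ SX := by simp [SX]
    have m20 : (!₂[2, 0] : E2) ∈ SX := by simp [SX]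
    have m11 : (!₂[1, 1] : E2) ∈ SX := by simp [SX]
    set T : Set E2 := ({!₂[0, 0], !₂[-1, -1], !₂[0, -3]} : Set E2) with hT
    have n00 : (!₂[0, 0] : E2) ∈ T := by simp [hT]
    have n11 : (!₂[-1, -1] : E2) ∈ T := by simp [hT]
    have n03 : (!₂[0, -3] : E2) ∈ T := by simp [hT]
    rcases le_or_gt (x 0 - 2) (3 * x 1) with hc1 | hc1
    · -- triangle (2,0), (1,1), (-1,-1)
      have sub1 : ({!₂[2, 0], !₂[1, 1], !₂[-1, -1]} : Set E2) ⊆ SX + T := by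
        rintro p (rfl | rfl | rfl)
        · exact mem_sum m20 n00 _ (by norm_num) (by norm_num)
        · exact mem_sum m11 n00 _ (by norm_num) (by norm_num)
        · exact mem_sum m00 n11 _ (by norm_num) (by norm_num)
      refine convexHull_mono sub1 (mem_tri 2 0 1 1 (-1) (-1)
        (α := (x 0 - x 1) / 2) (β := (2 - x 0 + 3 * x 1) / 4) (γ := (2 - x 0 - x 1) / 4)
        (by linarith) (by linarith) (by linarith) (by ring) (by ring) (by ring))
    · rcases le_or_gt (3 * x 0 - 6) (2 * x 1) with hc2 | hc2
      · -- triangle (2,0), (-1,-1), (0,-3)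
        have sub2 : ({!₂[2, 0], !₂[-1, -1], !₂[0, -3]} : Set E2) ⊆ SX + T := by
          rintro p (rfl | rfl | rfl)
          · exact mem_sum m20 n00 _ (by norm_num) (by norm_num)
          · exact mem_sum m00 n11 _ (by norm_num) (by norm_num)
          · exact mem_sum m00 n03 _ (by norm_num) (by norm_num)
        refine convexHull_mono sub2 (mem_tri 2 0 (-1) (-1) 0 (-3)
          (α := (3 + 2 * x 0 + x 1) / 7) (β := (6 - 3 * x 0 + 2 * x 1) / 7)
          (γ := (x 0 - 3 * x 1 - 2) / 7)
          (by linarith) (by linarith) (by linarith) (by ring) (by ring) (by ring))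
      · -- triangle (2,0), (0,-3), (2,-3)
        have sub3 : ({!₂[2, 0], !₂[0, -3], !₂[2, -3]} : Set E2) ⊆ SX + T := by
          rintro p (rfl | rfl | rfl)
          · exact mem_sum m20 n00 _ (by norm_num) (by norm_num)
          · exact mem_sum m00 n03 _ (by norm_num) (by norm_num)
          · exact mem_sum m20 n03 _ (by norm_num) (by norm_num)
        refine convexHull_mono sub3 (mem_tri 2 0 0 (-3) 2 (-3)
          (α := (3 + x 1) / 3) (β := (2 - x 0) / 2) (γ := (3 * x 0 - 2 * x 1 - 6) / 6)
          (by linarith) (by linarith) (by linarith) (by ring) (by ring) (by ring))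


def p20 : E2 := !₂[2, 0]
def p03 : E2 := !₂[0, 3]

lemma p20_0 : p20 0 = 2 := rfl
lemma p20_1 : p20 1 = 0 := rfl
lemma p03_0 : p03 0 = 0 := rfl
lemma p03_1 : p03 1 = 3 := rfl

def fm (x : E2) : E2 := if x 1 ≤ 3 then p20 - x else x - p03

lemma br1 {x : E2} (h : x ∈ PH) (h3 : x 1 ≤ 3) :
    (p20 - x) ∈ QH ∧ (p20 - x) 1 ≤ 0 := by
  obtain ⟨h1, h2, h3', h4, h5, h6⟩ := h
  have e0 : (p20 - x) 0 = 2 - x 0 := by rw [csub, p20_0]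
  have e1 : (p20 - x) 1 = 0 - x 1 := by rw [csub, p20_1]
  refine ⟨⟨?_, ?_, ?_, ?_, ?_⟩, ?_⟩ <;> simp only [e0, e1] <;> linarith

lemma br2 {x : E2} (h : x ∈ PH) (h3 : 3 < x 1) :
    (x - p03) ∈ QH ∧ 0 < (x - p03) 1 := by
  obtain ⟨h1, h2, h3', h4, h5, h6⟩ := h
  have e0 : (x - p03) 0 = x 0 - 0 := by rw [csub, p03_0]
  have e1 : (x - p03) 1 = x 1 - 3 := by rw [csub, p03_1]
  refine ⟨⟨?_, ?_, ?_, ?_, ?_⟩, ?_⟩ <;> simp only [e0, e1] <;> linarith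

lemma br1inv {w : E2} (h : w ∈ QH) (h0 : w 1 ≤ 0) :
    (p20 - w) ∈ PH ∧ (p20 - w) 1 ≤ 3 := by
  obtain ⟨h1, h2, h3, h4, h5⟩ := h
  have e0 : (p20 - w) 0 = 2 - w 0 := by rw [csub, p20_0]
  have e1 : (p20 - w) 1 = 0 - w 1 := by rw [csub, p20_1]
  refine ⟨⟨?_, ?_, ?_, ?_, ?_, ?_⟩, ?_⟩ <;> simp only [e0, e1] <;> linarith

lemma br2inv {w : E2} (h : w ∈ QH) (h0 : 0 < w 1) :
    (w + p03) ∈ PH ∧ 3 < (w + p03) 1 := by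
  obtain ⟨h1, h2, h3, h4, h5⟩ := h
  have e0 : (w + p03) 0 = w 0 + 0 := by rw [cadd, p03_0]
  have e1 : (w + p03) 1 = w 1 + 3 := by rw [cadd, p03_1]
  refine ⟨⟨?_, ?_, ?_, ?_, ?_, ?_⟩, ?_⟩ <;> simp only [e0, e1] <;> linarith

lemma IsZ_sub {a b : E2} (ha : IsZ a) (hb : IsZ b) : IsZ (a - b) := by
  intro i
  obtain ⟨m, hm⟩ := ha i
  obtain ⟨k, hk⟩ := hb i
  exact ⟨m - k, by rw [csub, hm, hk]; push_cast; ring⟩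

lemma IsZ_add {a b : E2} (ha : IsZ a) (hb : IsZ b) : IsZ (a + b) := by
  intro i
  obtain ⟨m, hm⟩ := ha i
  obtain ⟨k, hk⟩ := hb i
  exact ⟨m + k, by rw [cadd, hm, hk]; push_cast; ring⟩

lemma isZ20 : IsZ p20 := by
  intro i; fin_cases i
  · exact ⟨2, by show p20 0 = ((2 : ℤ) : ℝ); rw [p20_0]; norm_num⟩
  · exact ⟨0, by show p20 1 = ((0 : ℤ) : ℝ); rw [p20_1]; norm_num⟩

lemma isZ03 : IsZ p03 := by
  intro i; fin_cases i
  · exact ⟨0, by show p03 0 = ((0 : ℤ) : ℝ); rw [p03_0]; norm_num⟩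
  · exact ⟨3, by show p03 1 = ((3 : ℤ) : ℝ); rw [p03_1]; norm_num⟩

end St11

open St11

/-- For the triangles `X = conv{(0,0),(2,0),(1,1)}` and `Y = conv{(0,0),(1,1),(0,3)}`,
the Minkowski sums `P = X + Y` and `Q = X + (−Y)` have equal areas and the same
universal counting function. -/
theorem statement11 (X Y Pp Qq : Set (Euc 2))
    (hX : X = convexHull ℝ {!₂[0, 0], !₂[2, 0], !₂[1, 1]})
    (hY : Y = convexHull ℝ {!₂[0, 0], !₂[1, 1], !₂[0, 3]})
    (hPp : Pp = X + Y) (hQq : Qq = X + (-Y)) :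
    (volume Pp).toReal = (volume Qq).toReal ∧ SameUCF Pp Qq := by
  have hP : Pp = PH := by
    rw [hPp, hX, hY, ← convexHull_add]; exact P_eq
  have hQ : Qq = QH := by
    rw [hQq, hX, hY, ← convexHull_neg, ← convexHull_add]; exact Q_eq
  rw [hP, hQ]
  have m0 : Measurable fun x : E2 => x 0 := (EuclideanSpace.proj (0 : Fin 2)).continuous.measurable
  have m1 : Measurable fun x : E2 => x 1 := (EuclideanSpace.proj (1 : Fin 2)).continuous.measurable
  have mPH : MeasurableSet PH := by
    refine MeasurableSet.inter (measurableSet_le measurable_const m1) ?_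
    refine MeasurableSet.inter (measurableSet_le m0 (m1.add_const 2)) ?_
    refine MeasurableSet.inter (measurableSet_le ((m0.const_mul 2).add m1) measurable_const) ?_
    refine MeasurableSet.inter (measurableSet_le (m0.add m1) measurable_const) ?_
    exact MeasurableSet.inter (measurableSet_le m1 (m0.add_const 3))
      (measurableSet_le measurable_const m0)
  have mQH : MeasurableSet QH := by
    refine MeasurableSet.inter (measurableSet_le measurable_const ((m0.const_mul 2).add m1)) ?_
    refine MeasurableSet.inter (measurableSet_le measurable_const m1) ?_
    refine MeasurableSet.inter (measurableSet_le m0 measurable_const) ?_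
    exact MeasurableSet.inter (measurableSet_le (m0.add m1) measurable_const)
      (measurableSet_le m1 m0)
  set A1 : Set E2 := PH ∩ {x : E2 | x 1 ≤ 3} with hA1
  set A2 : Set E2 := PH ∩ {x : E2 | 3 < x 1} with hA2
  set B1 : Set E2 := QH ∩ {x : E2 | x 1 ≤ 0} with hB1def
  set B2 : Set E2 := QH ∩ {x : E2 | 0 < x 1} with hB2def
  have hPA : PH = A1 ∪ A2 := by
    ext x
    constructor
    · intro hx
      rcases le_or_gt (x 1) 3 with h | h
      · exact Or.inl ⟨hx, h⟩
      · exact Or.inr ⟨hx, h⟩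
    · rintro (⟨hx, -⟩ | ⟨hx, -⟩) <;> exact hx
  have hQB : QH = B1 ∪ B2 := by
    ext x
    constructor
    · intro hx
      rcases le_or_gt (x 1) 0 with h | h
      · exact Or.inl ⟨hx, h⟩
      · exact Or.inr ⟨hx, h⟩
    · rintro (⟨hx, -⟩ | ⟨hx, -⟩) <;> exact hx
  have hd1 : Disjoint A1 A2 := by
    rw [Set.disjoint_left]
    rintro x ⟨-, hx⟩ ⟨-, hx'⟩
    simp only [Set.mem_setOf_eq] at hx hx'
    linarith
  have hd2 : Disjoint B1 B2 := by
    rw [Set.disjoint_left]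
    rintro x ⟨-, hx⟩ ⟨-, hx'⟩
    simp only [Set.mem_setOf_eq] at hx hx'
    linarith
  have mA2 : MeasurableSet A2 := mPH.inter (measurableSet_lt measurable_const m1)
  have mB2 : MeasurableSet B2 := mQH.inter (measurableSet_lt measurable_const m1)
  have hB1 : B1 = (fun x : E2 => p20 - x) ⁻¹' A1 := by
    ext w
    constructor
    · rintro ⟨hw, hw1⟩
      exact br1inv hw hw1
    · rintro ⟨hp, hle⟩
      have h := br1 hp hle
      rw [sub_sub_cancel] at h
      exact h
  have hB2 : B2 = (fun x : E2 => x + p03) ⁻¹' A2 := by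
    ext w
    constructor
    · rintro ⟨hw, hw1⟩
      exact br2inv hw hw1
    · rintro ⟨hp, hlt⟩
      have h := br2 hp hlt
      rw [add_sub_cancel_right] at h
      exact h
  constructor
  · -- volume part
    have v1 : volume B1 = volume A1 := by
      rw [hB1]
      have e : (fun x : E2 => p20 - x) ⁻¹' A1
          = (fun x : E2 => -x) ⁻¹' ((fun x : E2 => p20 + x) ⁻¹' A1) := by
        ext x; simp [sub_eq_add_neg]
      rw [e, Measure.measure_preimage_neg, measure_preimage_add]
    have v2 : volume B2 = volume A2 := by
      rw [hB2, measure_preimage_add_right]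
    have vP : volume PH = volume A1 + volume A2 := by
      rw [hPA]; exact measure_union hd1 mA2
    have vQ : volume QH = volume B1 + volume B2 := by
      rw [hQB]; exact measure_union hd2 mB2
    rw [vP, vQ, v1, v2]
  · -- SameUCF
    intro π hinj hZmap
    have key : ∀ S : Set E2, {x | x ∈ π '' S ∧ IsZ x} = π '' (S ∩ π ⁻¹' {x | IsZ x}) := by
      intro S
      rw [Set.image_inter_preimage]
      rfl
    rw [key, key, Set.ncard_image_of_injective _ hinj, Set.ncard_image_of_injective _ hinj]
    set Λ : Set E2 := π ⁻¹' {x : E2 | IsZ x} with hΛ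
    have hmem : ∀ u : E2, IsZ u → ∀ x : E2, x ∈ Λ →
        (u - x ∈ Λ ∧ x - u ∈ Λ ∧ x + u ∈ Λ) := by
      intro u hu x hx
      have hπu : IsZ (π u) := hZmap u hu
      have hπx : IsZ (π x) := hx
      refine ⟨?_, ?_, ?_⟩
      · show IsZ (π (u - x)); rw [map_sub]; exact IsZ_sub hπu hπx
      · show IsZ (π (x - u)); rw [map_sub]; exact IsZ_sub hπx hπu
      · show IsZ (π (x + u)); rw [map_add]; exact IsZ_add hπx hπu
    have himg : QH ∩ Λ = fm '' (PH ∩ Λ) := by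
      apply Subset.antisymm
      · rintro w ⟨hwQ, hwΛ⟩
        rcases le_or_gt (w 1) 0 with hw0 | hw0
        · refine ⟨p20 - w, ⟨(br1inv hwQ hw0).1, (hmem _ isZ20 _ hwΛ).1⟩, ?_⟩
          have hle : (p20 - w) 1 ≤ 3 := (br1inv hwQ hw0).2
          simp only [fm, if_pos hle, sub_sub_cancel]
        · refine ⟨w + p03, ⟨(br2inv hwQ hw0).1, (hmem _ isZ03 _ hwΛ).2.2⟩, ?_⟩
          have hlt : 3 < (w + p03) 1 := (br2inv hwQ hw0).2
          simp only [fm, if_neg (not_le.2 hlt), add_sub_cancel_right]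
      · rintro - ⟨x, ⟨hxP, hxΛ⟩, rfl⟩
        rcases le_or_gt (x 1) 3 with hx3 | hx3
        · simp only [fm, if_pos hx3]
          exact ⟨(br1 hxP hx3).1, (hmem _ isZ20 _ hxΛ).1⟩
        · simp only [fm, if_neg (not_le.2 hx3)]
          exact ⟨(br2 hxP hx3).1, (hmem _ isZ03 _ hxΛ).2.1⟩
    have hinjOn : Set.InjOn fm (PH ∩ Λ) := by
      rintro x ⟨hxP, -⟩ y ⟨hyP, -⟩ h
      rcases le_or_gt (x 1) 3 with hx3 | hx3 <;> rcases le_or_gt (y 1) 3 with hy3 | hy3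
      · simp only [fm, if_pos hx3, if_pos hy3] at h
        exact sub_right_injective h
      · simp only [fm, if_pos hx3, if_neg (not_le.2 hy3)] at h
        exfalso
        have h1 := congrArg (fun v : E2 => v 1) h
        rw [csub, csub] at h1
        have e1 : p20 1 = 0 := rfl
        have e2 : p03 1 = 3 := rfl
        rw [e1, e2] at h1
        have hx1 : 0 ≤ x 1 := hxP.1
        linarith
      · simp only [fm, if_neg (not_le.2 hx3), if_pos hy3] at h
        exfalso
        have h1 := congrArg (fun v : E2 => v 1) h
        rw [csub, csub] at h1
        have e1 : p20 1 = 0 := rfl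
        have e2 : p03 1 = 3 := rfl
        rw [e1, e2] at h1
        have hy1 : 0 ≤ y 1 := hyP.1
        linarith
      · simp only [fm, if_neg (not_le.2 hx3), if_neg (not_le.2 hy3)] at h
        exact sub_left_injective h
    rw [himg, Set.ncard_image_of_injOn hinjOn]
end
end
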